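/- arXiv:1611.00622 — 4 statements merged into one kernel-verified Lean document; each statement's English description precedes it below -/
import Mathlib

section
/- Let f ∈ SL^∞ and for each m let r_m^{(θ)} = Σ_{I ∈ 𝒟_m} θ_I h_I with |θ_I| ≤ 1. Then for any finite M, (Σ_{m=1}^M |⟨f, r_m^{(θ)}⟩|²)^{1/2} ≤ ‖f‖_{SL^∞}. Consequently sup over choices of coefficients c with ‖c‖_∞ ≤ 1 of |⟨f, r_m^{(c)}⟩| tends to 0 as m → ∞. -/
/- Setup: dyadic intervals on [0,1), L^∞-normalized Haar coefficients, the SL^∞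
square-function norm, the dyadic H^1 norm, and the L² pairing, all expressed on
the space `Dy → ℝ` of Haar coefficient sequences. -/

open MeasureTheory Filter ENNReal

noncomputable section

/-- Dyadic intervals, encoded as pairs (n, k) with k < 2^n. -/
abbrev Dy := {p : ℕ × ℕ // p.2 < 2 ^ p.1}

/-- The level (frequency) of a dyadic interval. -/
def dlev (I : Dy) : ℕ := I.val.1

/-- The dyadic interval [k/2^n, (k+1)/2^n) as a subset of ℝ. -/
def dint (I : Dy) : Set ℝ :=
  Set.Ico ((I.val.2 : ℝ) / 2 ^ I.val.1) ((I.val.2 + 1 : ℝ) / 2 ^ I.val.1)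

/-- The length |I| = 2^{-n} of a dyadic interval. -/
def dlen (I : Dy) : ℝ := ((2 : ℝ) ^ I.val.1)⁻¹

/-- The square function (Σ_I a_I² 1_I(x)) of the Haar series with coefficients `a`. -/
def sqFn (a : Dy → ℝ) (x : ℝ) : ℝ≥0∞ :=
  ∑' I : Dy, Set.indicator (dint I) (fun _ => ENNReal.ofReal ((a I) ^ 2)) x

/-- The SL^∞ norm: ‖Σ a_I h_I‖ = sup_x (Σ a_I² 1_I(x))^{1/2}. -/
def slNorm (a : Dy → ℝ) : ℝ≥0∞ := ⨆ x : ℝ, sqFn a x ^ (1 / 2 : ℝ)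

/-- The dyadic H^1 norm: ∫₀¹ (Σ a_I² 1_I(x))^{1/2} dx. -/
def h1Norm (a : Dy → ℝ) : ℝ≥0∞ := ∫⁻ x in Set.Ico (0 : ℝ) 1, sqFn a x ^ (1 / 2 : ℝ)

/-- The L² pairing ⟨f, g⟩ = Σ_I a_I b_I |I| of two Haar series. -/
def pairing (a b : Dy → ℝ) : ℝ := ∑' I : Dy, a I * b I * dlen I


/-- The Rademacher-type function r_m^{(c)} = Σ_{I ∈ 𝒟_m} c_I h_I (its Haar coefficients). -/
def radem (c : Dy → ℝ) (m : ℕ) : Dy → ℝ := fun I => if dlev I = m then c I else 0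

/-- extension of coefficients to all pairs -/
def Aex (a : Dy → ℝ) (n k : ℕ) : ℝ := if h : k < 2 ^ n then a ⟨(n, k), h⟩ else 0

def dyOf (m k : ℕ) : Dy := if h : k < 2 ^ m then ⟨(m, k), h⟩ else ⟨(m, 0), Nat.two_pow_pos m⟩

lemma dlev_dyOf (m k : ℕ) : dlev (dyOf m k) = m := by
  unfold dyOf; split <;> rfl

lemma dyOf_val (m k : ℕ) (h : k < 2 ^ m) : dyOf m k = ⟨(m, k), h⟩ := dif_pos h

lemma Aex_eq (a : Dy → ℝ) (m k : ℕ) (h : k < 2 ^ m) : Aex a m k = a (dyOf m k) := by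
  rw [Aex, dif_pos h, dyOf_val m k h]

/-- level-m dyadic intervals as a finset -/
def dyF (m : ℕ) : Finset Dy :=
  (Finset.range (2 ^ m)).attach.map
    ⟨fun k => ⟨(m, k.1), Finset.mem_range.mp k.2⟩,
     fun x y h => Subtype.ext (by have := congrArg (fun I : Dy => I.val.2) h; simpa using this)⟩

lemma pairing_radem (a c : Dy → ℝ) (m : ℕ) :
    pairing a (radem c m) =
      (∑ k ∈ Finset.range (2 ^ m), Aex a m k * Aex c m k) * ((2 : ℝ) ^ m)⁻¹ := by
  have h0 : ∀ I : Dy, I ∉ dyF m → a I * radem c m I * dlen I = 0 := by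
    intro I hI
    rcases eq_or_ne (dlev I) m with hm | hm
    · exfalso; apply hI
      rw [dyF, Finset.mem_map]
      refine ⟨⟨I.val.2, Finset.mem_range.mpr (hm ▸ I.prop)⟩, Finset.mem_attach _ _, ?_⟩
      refine Subtype.ext (show ((m, I.val.2) : ℕ × ℕ) = I.val from ?_)
      rw [← hm]; exact Prod.mk.eta
    · simp [radem, hm]
  rw [pairing, tsum_eq_sum h0, dyF, Finset.sum_map]
  have : ∀ k ∈ (Finset.range (2 ^ m)).attach,
      (fun I => a I * radem c m I * dlen I)
        (⟨(m, k.1), Finset.mem_range.mp k.2⟩ : Dy) =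
      Aex a m k.1 * Aex c m k.1 * ((2 : ℝ) ^ m)⁻¹ := by
    intro k _
    have hk : k.1 < 2 ^ m := Finset.mem_range.mp k.2
    simp only [radem, dlev, Aex, dif_pos hk, dlen]; simp
  rw [Finset.sum_congr rfl (by intro k hk; exact this k hk)]
  rw [Finset.sum_attach (Finset.range (2 ^ m))
    (fun k => Aex a m k * Aex c m k * ((2 : ℝ) ^ m)⁻¹), ← Finset.sum_mul]

lemma sqFn_le_slNorm_sq (a : Dy → ℝ) (x : ℝ) : sqFn a x ≤ slNorm a ^ 2 := by
  have h : sqFn a x ^ (1 / 2 : ℝ) ≤ slNorm a :=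
    le_iSup (fun x => sqFn a x ^ (1 / 2 : ℝ)) x
  have h2 : (sqFn a x ^ (1 / 2 : ℝ)) ^ (2 : ℝ) ≤ slNorm a ^ (2 : ℝ) :=
    ENNReal.rpow_le_rpow h (by norm_num)
  rw [← ENNReal.rpow_mul] at h2
  norm_num at h2
  exact h2

/-- chain lemma, Finset version -/
lemma chainF (a : Dy → ℝ) (ha : slNorm a ≠ ⊤) (F : Finset Dy) (x : ℝ)
    (hx : ∀ I ∈ F, x ∈ dint I) :
    ∑ I ∈ F, (a I) ^ 2 ≤ ((slNorm a).toReal) ^ 2 := by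
  have htop : slNorm a ^ 2 ≠ ⊤ := ENNReal.pow_ne_top ha
  have key : ENNReal.ofReal (∑ I ∈ F, (a I) ^ 2) ≤ slNorm a ^ 2 := by
    rw [ENNReal.ofReal_sum_of_nonneg (fun I _ => sq_nonneg _)]
    refine le_trans ?_ (sqFn_le_slNorm_sq a x)
    refine le_trans ?_ (ENNReal.sum_le_tsum F)
    refine le_of_eq (Finset.sum_congr rfl ?_)
    intro I hI
    rw [Set.indicator_of_mem (hx I hI)]
  have := (ENNReal.ofReal_le_iff_le_toReal htop).mp key
  rwa [ENNReal.toReal_pow] at this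

/-- chain lemma, indexed version -/
lemma chainA (a : Dy → ℝ) (ha : slNorm a ≠ ⊤) (s : Finset ℕ) (κ : ℕ → ℕ) (x : ℝ)
    (hx : ∀ m ∈ s, x ∈ dint (dyOf m (κ m))) :
    ∑ m ∈ s, (a (dyOf m (κ m))) ^ 2 ≤ ((slNorm a).toReal) ^ 2 := by
  have hinj : ∀ m ∈ s, ∀ m' ∈ s, dyOf m (κ m) = dyOf m' (κ m') → m = m' := by
    intro m _ m' _ h
    have := congrArg dlev h
    rwa [dlev_dyOf, dlev_dyOf] at this
  have heq : ∑ m ∈ s, (a (dyOf m (κ m))) ^ 2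
      = ∑ I ∈ s.image (fun m => dyOf m (κ m)), (a I) ^ 2 :=
    (Finset.sum_image (f := fun I => (a I) ^ 2) (g := fun m => dyOf m (κ m)) hinj).symm
  rw [heq]
  refine chainF a ha _ x ?_
  intro I hI
  rw [Finset.mem_image] at hI
  obtain ⟨m, hm, rfl⟩ := hI
  exact hx m hm

lemma sum_range_mul' (g : ℕ → ℝ) (A B : ℕ) :
    ∑ j ∈ Finset.range (A * B), g j
      = ∑ k ∈ Finset.range A, ∑ r ∈ Finset.range B, g (k * B + r) := by
  induction A with
  | zero => simp
  | succ n ih =>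
      rw [Finset.sum_range_succ, ← ih, Nat.succ_mul, Finset.sum_range_add]

lemma sum_range_div (f : ℕ → ℝ) (A B : ℕ) (hB : 0 < B) :
    ∑ j ∈ Finset.range (A * B), f (j / B) = (B : ℝ) * ∑ k ∈ Finset.range A, f k := by
  rw [sum_range_mul' (fun j => f (j / B)) A B, Finset.mul_sum]
  refine Finset.sum_congr rfl fun k _ => ?_
  have : ∀ r ∈ Finset.range B, f ((k * B + r) / B) = f k := by
    intro r hr
    rw [mul_comm k B, Nat.mul_add_div hB, Nat.div_eq_of_lt (Finset.mem_range.mp hr),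
      add_zero]
  rw [Finset.sum_congr rfl this, Finset.sum_const, Finset.card_range, nsmul_eq_mul]

lemma div_lt_pow (j m M : ℕ) (h : m ≤ M) (hj : j < 2 ^ M) : j / 2 ^ (M - m) < 2 ^ m := by
  apply Nat.div_lt_of_lt_mul
  rwa [← pow_add, Nat.sub_add_cancel h]

lemma mem_dint_div (j m M : ℕ) (h : m ≤ M) (hj : j < 2 ^ M) :
    ((j : ℝ) / 2 ^ M) ∈ dint (dyOf m (j / 2 ^ (M - m))) := by
  set k := j / 2 ^ (M - m) with hk
  have hklt : k < 2 ^ m := div_lt_pow j m M h hj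
  rw [dyOf_val m k hklt]
  have h1 : k * 2 ^ (M - m) ≤ j := Nat.div_mul_le_self j _
  have h2 : j < (k + 1) * 2 ^ (M - m) := by
    rw [add_mul, one_mul, hk, mul_comm]
    have := Nat.div_add_mod j (2 ^ (M - m))
    have hmod := Nat.mod_lt j (Nat.two_pow_pos (M - m))
    omega
  have hpow : (2 : ℝ) ^ M = 2 ^ m * 2 ^ (M - m) := by
    rw [← pow_add, Nat.add_sub_cancel' h]
  have h1' : (k : ℝ) * 2 ^ (M - m) ≤ j := by exact_mod_cast h1
  have h2' : (j : ℝ) < (k + 1) * 2 ^ (M - m) := by exact_mod_cast h2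
  have hm : (0 : ℝ) < 2 ^ m := by positivity
  have hb : (0 : ℝ) < 2 ^ (M - m) := by positivity
  constructor
  · show (k : ℝ) / 2 ^ m ≤ j / 2 ^ M
    rw [div_le_div_iff₀ hm (by positivity), hpow]
    nlinarith
  · show (j : ℝ) / 2 ^ M < ((k : ℝ) + 1) / 2 ^ m
    rw [div_lt_div_iff₀ (by positivity) hm, hpow]
    nlinarith

lemma main_sq (a : Dy → ℝ) (ha : slNorm a ≠ ⊤)
    (θ : ℕ → Dy → ℝ) (hθ : ∀ m I, |θ m I| ≤ 1) (M : ℕ) :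
    ∑ m ∈ Finset.Icc 1 M, (pairing a (radem (θ m) m)) ^ 2 ≤ ((slNorm a).toReal) ^ 2 := by
  set S := (slNorm a).toReal with hSdef
  have hS : 0 ≤ S := ENNReal.toReal_nonneg
  set p : ℕ → ℝ := fun m => pairing a (radem (θ m) m) with hp
  set g : ℕ → ℕ → ℝ :=
    fun m j => Aex a m (j / 2 ^ (M - m)) * Aex (θ m) m (j / 2 ^ (M - m)) with hg
  set T := ∑ m ∈ Finset.Icc 1 M, (p m) ^ 2 with hT
  have hT0 : 0 ≤ T := Finset.sum_nonneg fun m _ => sq_nonneg _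
  have hsqT : Real.sqrt T ^ 2 = T := Real.sq_sqrt hT0
  -- refined representation
  have hrep : ∀ m ∈ Finset.Icc 1 M,
      p m = ((2 : ℝ) ^ M)⁻¹ * ∑ j ∈ Finset.range (2 ^ M), g m j := by
    intro m hm
    have hmM : m ≤ M := (Finset.mem_Icc.mp hm).2
    have hR : (2 : ℕ) ^ M = 2 ^ m * 2 ^ (M - m) := by
      rw [← pow_add, Nat.add_sub_cancel' hmM]
    have hthis : ∑ j ∈ Finset.range (2 ^ M), g m j
        = (2 : ℝ) ^ (M - m) * ∑ k ∈ Finset.range (2 ^ m),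
            Aex a m k * Aex (θ m) m k := by
      rw [hR]
      exact_mod_cast sum_range_div (fun k => Aex a m k * Aex (θ m) m k) (2 ^ m)
        (2 ^ (M - m)) (Nat.two_pow_pos _)
    have hpm : p m = (∑ k ∈ Finset.range (2 ^ m), Aex a m k * Aex (θ m) m k)
        * ((2 : ℝ) ^ m)⁻¹ := pairing_radem a (θ m) m
    rw [hpm, hthis]
    have hpow : (2 : ℝ) ^ M = 2 ^ m * 2 ^ (M - m) := by
      rw [← pow_add, Nat.add_sub_cancel' hmM]
    rw [hpow]
    have h1 : (0 : ℝ) < 2 ^ m := by positivity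
    have h2 : (0 : ℝ) < 2 ^ (M - m) := by positivity
    field_simp
  -- pointwise Cauchy-Schwarz bound
  have hkey : ∀ j ∈ Finset.range (2 ^ M),
      ∑ m ∈ Finset.Icc 1 M, p m * g m j ≤ Real.sqrt T * S := by
    intro j hj
    have hjlt : j < 2 ^ M := Finset.mem_range.mp hj
    have hgsq : ∑ m ∈ Finset.Icc 1 M, (g m j) ^ 2 ≤ S ^ 2 := by
      have hle : ∑ m ∈ Finset.Icc 1 M, (g m j) ^ 2
          ≤ ∑ m ∈ Finset.Icc 1 M, (a (dyOf m (j / 2 ^ (M - m)))) ^ 2 := by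
        refine Finset.sum_le_sum fun m hm => ?_
        have hmM : m ≤ M := (Finset.mem_Icc.mp hm).2
        have hk : j / 2 ^ (M - m) < 2 ^ m := div_lt_pow j m M hmM hjlt
        have hA : Aex a m (j / 2 ^ (M - m)) = a (dyOf m (j / 2 ^ (M - m))) :=
          Aex_eq a m _ hk
        have hth : |Aex (θ m) m (j / 2 ^ (M - m))| ≤ 1 := by
          rw [Aex, dif_pos hk]
          exact hθ m _
        have ht2 : (Aex (θ m) m (j / 2 ^ (M - m))) ^ 2 ≤ 1 := by
          rw [← sq_abs]
          nlinarith [abs_nonneg (Aex (θ m) m (j / 2 ^ (M - m)))]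
        show (g m j) ^ 2 ≤ _
        rw [show g m j = Aex a m (j / 2 ^ (M - m)) * Aex (θ m) m (j / 2 ^ (M - m))
          from rfl, mul_pow, hA]
        nlinarith [mul_nonneg (sq_nonneg (a (dyOf m (j / 2 ^ (M - m)))))
          (sub_nonneg.mpr ht2)]
      refine hle.trans ?_
      exact chainA a ha (Finset.Icc 1 M) (fun m => j / 2 ^ (M - m)) ((j : ℝ) / 2 ^ M)
        (fun m hm => mem_dint_div j m M (Finset.mem_Icc.mp hm).2 hjlt)
    have hcs : (∑ m ∈ Finset.Icc 1 M, p m * g m j) ^ 2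
        ≤ T * ∑ m ∈ Finset.Icc 1 M, (g m j) ^ 2 :=
      Finset.sum_mul_sq_le_sq_mul_sq _ _ _
    calc ∑ m ∈ Finset.Icc 1 M, p m * g m j
        ≤ |∑ m ∈ Finset.Icc 1 M, p m * g m j| := le_abs_self _
      _ = Real.sqrt ((∑ m ∈ Finset.Icc 1 M, p m * g m j) ^ 2) :=
          (Real.sqrt_sq_eq_abs _).symm
      _ ≤ Real.sqrt ((Real.sqrt T * S) ^ 2) := by
          apply Real.sqrt_le_sqrt
          nlinarith [mul_nonneg hT0 (sub_nonneg.mpr hgsq)]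
      _ = Real.sqrt T * S := Real.sqrt_sq (by positivity)
  -- put it together
  have step1 : T = ((2 : ℝ) ^ M)⁻¹ *
      ∑ j ∈ Finset.range (2 ^ M), ∑ m ∈ Finset.Icc 1 M, p m * g m j := by
    have h1 : ∀ m ∈ Finset.Icc 1 M,
        p m ^ 2 = ∑ j ∈ Finset.range (2 ^ M), ((2 : ℝ) ^ M)⁻¹ * (p m * g m j) := by
      intro m hm
      calc p m ^ 2
          = p m * (((2 : ℝ) ^ M)⁻¹ * ∑ j ∈ Finset.range (2 ^ M), g m j) := by
            rw [← hrep m hm, sq]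
        _ = ∑ j ∈ Finset.range (2 ^ M), ((2 : ℝ) ^ M)⁻¹ * (p m * g m j) := by
            rw [Finset.mul_sum, Finset.mul_sum]
            exact Finset.sum_congr rfl fun j _ => by ring
    calc T = ∑ m ∈ Finset.Icc 1 M, ∑ j ∈ Finset.range (2 ^ M),
          ((2 : ℝ) ^ M)⁻¹ * (p m * g m j) := Finset.sum_congr rfl h1
      _ = ∑ j ∈ Finset.range (2 ^ M), ∑ m ∈ Finset.Icc 1 M,
          ((2 : ℝ) ^ M)⁻¹ * (p m * g m j) := Finset.sum_comm
      _ = ((2 : ℝ) ^ M)⁻¹ * ∑ j ∈ Finset.range (2 ^ M),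
          ∑ m ∈ Finset.Icc 1 M, p m * g m j := by
          rw [Finset.mul_sum]
          exact Finset.sum_congr rfl fun j _ => by rw [Finset.mul_sum]
  have hTle : T ≤ Real.sqrt T * S := by
    have hsum : ∑ j ∈ Finset.range (2 ^ M), ∑ m ∈ Finset.Icc 1 M, p m * g m j
        ≤ (2 : ℝ) ^ M * (Real.sqrt T * S) := by
      calc ∑ j ∈ Finset.range (2 ^ M), ∑ m ∈ Finset.Icc 1 M, p m * g m j
          ≤ ∑ _j ∈ Finset.range (2 ^ M), Real.sqrt T * S := Finset.sum_le_sum hkey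
        _ = (2 : ℝ) ^ M * (Real.sqrt T * S) := by
            rw [Finset.sum_const, Finset.card_range, nsmul_eq_mul]
            push_cast
            ring
    calc T = ((2 : ℝ) ^ M)⁻¹ * ∑ j ∈ Finset.range (2 ^ M), ∑ m ∈ Finset.Icc 1 M,
            p m * g m j := step1
      _ ≤ ((2 : ℝ) ^ M)⁻¹ * ((2 : ℝ) ^ M * (Real.sqrt T * S)) :=
          mul_le_mul_of_nonneg_left hsum (by positivity)
      _ = Real.sqrt T * S := by field_simp
  nlinarith [Real.sqrt_nonneg T, sq_nonneg (Real.sqrt T - S)]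


def sgn (a : Dy → ℝ) : Dy → ℝ := fun I => if a I < 0 then -1 else 1

lemma sgn_abs (a : Dy → ℝ) : ∀ I : Dy, |sgn a I| ≤ 1 := by
  intro I
  rw [sgn]
  split <;> norm_num

def qq (a : Dy → ℝ) (m : ℕ) : ℝ :=
  (∑ k ∈ Finset.range (2 ^ m), |Aex a m k|) * ((2 : ℝ) ^ m)⁻¹

lemma qq_nonneg (a : Dy → ℝ) (m : ℕ) : 0 ≤ qq a m := by
  apply mul_nonneg (Finset.sum_nonneg fun k _ => abs_nonneg _) (by positivity)

lemma pairing_sgn (a : Dy → ℝ) (m : ℕ) : pairing a (radem (sgn a) m) = qq a m := by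
  rw [pairing_radem, qq]
  congr 1
  refine Finset.sum_congr rfl fun k _ => ?_
  rw [Aex, Aex]
  split
  · rw [sgn]
    split
    · rename_i h1 h2
      rw [abs_of_neg h2]; ring
    · rename_i h1 h2
      rw [abs_of_nonneg (not_lt.mp h2)]; ring
  · norm_num

lemma pairing_le_qq (a : Dy → ℝ) (c : Dy → ℝ) (hc : ∀ I, |c I| ≤ 1) (m : ℕ) :
    |pairing a (radem c m)| ≤ qq a m := by
  rw [pairing_radem, qq, abs_mul, abs_inv, abs_pow]
  rw [show |(2 : ℝ)| = 2 from abs_of_nonneg (by norm_num)]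
  apply mul_le_mul_of_nonneg_right _ (by positivity)
  refine (Finset.abs_sum_le_sum_abs _ _).trans ?_
  refine Finset.sum_le_sum fun k _ => ?_
  rw [abs_mul]
  have h1 : |Aex c m k| ≤ 1 := by
    rw [Aex]
    split
    · exact hc _
    · norm_num
  nlinarith [abs_nonneg (Aex a m k), abs_nonneg (Aex c m k)]

instance : Nonempty {c : Dy → ℝ // ∀ I, |c I| ≤ 1} :=
  ⟨⟨fun _ => 0, fun I => by norm_num⟩⟩

lemma iSup_eq_qq (a : Dy → ℝ) (m : ℕ) :
    (⨆ c : {c : Dy → ℝ // ∀ I, |c I| ≤ 1}, |pairing a (radem c.val m)|) = qq a m := by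
  have hub : ∀ c : {c : Dy → ℝ // ∀ I, |c I| ≤ 1},
      |pairing a (radem c.val m)| ≤ qq a m := fun c => pairing_le_qq a c.val c.prop m
  refine le_antisymm (ciSup_le hub) ?_
  have hbdd : BddAbove (Set.range fun c : {c : Dy → ℝ // ∀ I, |c I| ≤ 1} =>
      |pairing a (radem c.val m)|) := ⟨qq a m, by rintro _ ⟨c, rfl⟩; exact hub c⟩
  have hmem : (⟨sgn a, sgn_abs a⟩ : {c : Dy → ℝ // ∀ I, |c I| ≤ 1})
      = ⟨sgn a, sgn_abs a⟩ := rfl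
  calc qq a m = |pairing a (radem (sgn a) m)| := by
        rw [pairing_sgn, abs_of_nonneg (qq_nonneg a m)]
    _ ≤ _ := le_ciSup hbdd ⟨sgn a, sgn_abs a⟩

theorem rademacher_pairing_sq_sum_le' (a : Dy → ℝ) (ha : slNorm a ≠ ⊤)
    (θ : ℕ → Dy → ℝ) (hθ : ∀ m I, |θ m I| ≤ 1) :
    (∀ M : ℕ,
      Real.sqrt (∑ m ∈ Finset.Icc 1 M, (pairing a (radem (θ m) m)) ^ 2)
        ≤ (slNorm a).toReal) ∧
    Filter.Tendsto
      (fun m => ⨆ c : {c : Dy → ℝ // ∀ I, |c I| ≤ 1}, |pairing a (radem c.val m)|)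
      Filter.atTop (nhds 0) := by
  have hS : 0 ≤ (slNorm a).toReal := ENNReal.toReal_nonneg
  constructor
  · intro M
    have h := main_sq a ha θ hθ M
    calc Real.sqrt (∑ m ∈ Finset.Icc 1 M, (pairing a (radem (θ m) m)) ^ 2)
        ≤ Real.sqrt (((slNorm a).toReal) ^ 2) := Real.sqrt_le_sqrt h
      _ = (slNorm a).toReal := Real.sqrt_sq hS
  · have hsgn := sgn_abs a
    have hsum : ∀ M, ∑ m ∈ Finset.Icc 1 M, (qq a m) ^ 2 ≤ ((slNorm a).toReal) ^ 2 := by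
      intro M
      have h := main_sq a ha (fun _ => sgn a) (fun _ I => hsgn I) M
      calc ∑ m ∈ Finset.Icc 1 M, (qq a m) ^ 2
          = ∑ m ∈ Finset.Icc 1 M, (pairing a (radem (sgn a) m)) ^ 2 :=
            Finset.sum_congr rfl fun m _ => by rw [pairing_sgn]
        _ ≤ _ := h
    have hsummable : Summable (fun m => (qq a m) ^ 2) := by
      apply summable_of_sum_range_le (c := (qq a 0) ^ 2 + ((slNorm a).toReal) ^ 2)
        (fun m => sq_nonneg _)
      intro n
      have hsub : Finset.range n ⊆ insert 0 (Finset.Icc 1 n) := by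
        intro i hi
        rw [Finset.mem_insert, Finset.mem_Icc]
        have := Finset.mem_range.mp hi
        omega
      calc ∑ i ∈ Finset.range n, (qq a i) ^ 2
          ≤ ∑ i ∈ insert 0 (Finset.Icc 1 n), (qq a i) ^ 2 :=
            Finset.sum_le_sum_of_subset_of_nonneg hsub (fun i _ _ => sq_nonneg _)
        _ = (qq a 0) ^ 2 + ∑ i ∈ Finset.Icc 1 n, (qq a i) ^ 2 :=
            Finset.sum_insert (by simp)
        _ ≤ (qq a 0) ^ 2 + ((slNorm a).toReal) ^ 2 := by
            exact add_le_add_right (hsum n) _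
    have hsq : Filter.Tendsto (fun m => (qq a m) ^ 2) Filter.atTop (nhds 0) :=
      hsummable.tendsto_atTop_zero
    have hq : Filter.Tendsto (fun m => qq a m) Filter.atTop (nhds 0) := by
      have h1 : Filter.Tendsto (fun m => Real.sqrt ((qq a m) ^ 2)) Filter.atTop
          (nhds (Real.sqrt 0)) := (Real.continuous_sqrt.tendsto 0).comp hsq
      rw [Real.sqrt_zero] at h1
      refine h1.congr fun m => ?_
      rw [Real.sqrt_sq (qq_nonneg a m)]
    refine hq.congr fun m => ?_
    rw [iSup_eq_qq]

/-- for f ∈ SL^∞ and coefficients θ with |θ_I| ≤ 1,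
(Σ_{m=1}^M |⟨f, r_m^{(θ)}⟩|²)^{1/2} ≤ ‖f‖_{SL^∞}; consequently
sup_{‖c‖_∞ ≤ 1} |⟨f, r_m^{(c)}⟩| → 0 as m → ∞. -/
theorem rademacher_pairing_sq_sum_le (a : Dy → ℝ) (ha : slNorm a ≠ ⊤)
    (θ : ℕ → Dy → ℝ) (hθ : ∀ m I, |θ m I| ≤ 1) :
    (∀ M : ℕ,
      Real.sqrt (∑ m ∈ Finset.Icc 1 M, (pairing a (radem (θ m) m)) ^ 2)
        ≤ (slNorm a).toReal) ∧
    Filter.Tendsto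
      (fun m => ⨆ c : {c : Dy → ℝ // ∀ I, |c I| ≤ 1}, |pairing a (radem c.val m)|)
      Filter.atTop (nhds 0) :=
  rademacher_pairing_sq_sum_le' a ha θ hθ

end
end

section
/- Let T : SL^∞ → SL^∞ be a bounded linear operator and g ∈ H^1. For sign sequences ε with |ε_I| = 1, let r_m^{(ε)} = Σ_{I∈𝒟_m} ε_I h_I. Then for any finite M, (Σ_{m=1}^M |⟨T r_m^{(ε)}, g⟩|²)^{1/2} ≤ ‖T‖ · ‖g‖_{H^1}; hence sup_{‖c‖_∞ ≤ 1} |⟨T r_m^{(c)}, g⟩| → 0 as m → ∞. -/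
/- Setup: dyadic intervals on [0,1), L^∞-normalized Haar coefficients, the SL^∞
square-function norm, the dyadic H^1 norm, and the L² pairing, all expressed on
the space `Dy → ℝ` of Haar coefficient sequences. -/

open MeasureTheory Filter ENNReal

noncomputable section

lemma dlen_pos (I : Dy) : 0 < dlen I := by
  unfold dlen; positivity

lemma dint_subset (I : Dy) : dint I ⊆ Set.Ico (0:ℝ) 1 := by
  rintro x ⟨h1, h2⟩
  have hpow : (0:ℝ) < 2 ^ I.val.1 := by positivity
  constructor
  · exact le_trans (by positivity) h1
  · have : ((I.val.2 : ℝ) + 1) / 2 ^ I.val.1 ≤ 1 := by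
      rw [div_le_one hpow]
      have : (I.val.2 : ℝ) + 1 ≤ (2:ℝ) ^ I.val.1 := by
        have := I.property
        have : ((I.val.2 + 1 : ℕ) : ℝ) ≤ ((2 ^ I.val.1 : ℕ) : ℝ) := by
          exact_mod_cast Nat.succ_le_of_lt this
        push_cast at this
        linarith
      linarith
    exact lt_of_lt_of_le h2 this

lemma volume_dint (I : Dy) : volume (dint I) = ENNReal.ofReal (dlen I) := by
  rw [dint, Real.volume_Ico]
  congr 1
  have hpow : (0:ℝ) < 2 ^ I.val.1 := by positivity
  field_simp [dlen]
  rw [dlen, mul_inv_cancel₀ hpow.ne']; ring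

lemma dint_unique {I J : Dy} (h : dlev I = dlev J) {x : ℝ}
    (hI : x ∈ dint I) (hJ : x ∈ dint J) : I = J := by
  obtain ⟨⟨n, k⟩, hk⟩ := I
  obtain ⟨⟨n', k'⟩, hk'⟩ := J
  simp only [dlev] at h
  subst h
  simp only [dint, Set.mem_Ico] at hI hJ
  have hpow : (0:ℝ) < 2 ^ n := by positivity
  have hkx : (k:ℝ) ≤ x * 2 ^ n := by
    have := hI.1; rw [div_le_iff₀ hpow] at this; linarith
  have hkx2 : x * 2 ^ n < (k:ℝ) + 1 := by
    have := hI.2; rw [lt_div_iff₀ hpow] at this; linarith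
  have hk'x : (k':ℝ) ≤ x * 2 ^ n := by
    have := hJ.1; rw [div_le_iff₀ hpow] at this; linarith
  have hk'x2 : x * 2 ^ n < (k':ℝ) + 1 := by
    have := hJ.2; rw [lt_div_iff₀ hpow] at this; linarith
  have h1 : (k:ℝ) < k' + 1 := lt_of_le_of_lt hkx hk'x2
  have h2 : (k':ℝ) < k + 1 := lt_of_le_of_lt hk'x hkx2
  have : k = k' := by
    have h1' : k < k' + 1 := by exact_mod_cast h1
    have h2' : k' < k + 1 := by exact_mod_cast h2
    omega
  subst this
  rfl

lemma measurableSet_dint (I : Dy) : MeasurableSet (dint I) := by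
  unfold dint; exact measurableSet_Ico

lemma measurable_sqFn (a : Dy → ℝ) : Measurable (sqFn a) :=
  Measurable.ennreal_tsum fun I =>
    (measurable_const.indicator (measurableSet_Ico))

lemma level_tsum_le (m : ℕ) (x : ℝ) (t : ℝ≥0∞) :
    ∑' I : Dy, (if dlev I = m then Set.indicator (dint I) (fun _ => t) x else 0) ≤ t := by
  by_cases h : ∃ I : Dy, dlev I = m ∧ x ∈ dint I
  · obtain ⟨I₀, hm, hx⟩ := h
    rw [tsum_eq_single I₀]
    · simp only [hm, if_pos]
      unfold Set.indicator; split <;> simp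
    · intro J hJ
      split_ifs with hJm
      · rw [Set.indicator_apply_eq_zero]
        intro hxJ
        exact absurd (dint_unique (hJm.trans hm.symm) hxJ hx) hJ
      · rfl
  · push_neg at h
    have : ∀ I : Dy, (if dlev I = m then Set.indicator (dint I) (fun _ => t) x else 0) = 0 := by
      intro I
      split_ifs with hI
      · rw [Set.indicator_apply_eq_zero]; intro hxI; exact absurd hxI (h I hI)
      · rfl
    simp only [this, tsum_zero]
    exact zero_le

lemma sqrt_ofReal_sq (a : ℝ) : ENNReal.ofReal (a ^ 2) ^ (1/2 : ℝ) = ENNReal.ofReal |a| := by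
  rw [ENNReal.ofReal_rpow_of_nonneg (sq_nonneg a) (by norm_num)]
  congr 1
  rw [show (a:ℝ)^2 = |a|^2 by rw [sq_abs], ← Real.rpow_natCast |a| 2,
    ← Real.rpow_mul (abs_nonneg a)]
  norm_num

/-- Cauchy–Schwarz / pairing estimate in `ℝ≥0∞`. -/
lemma tsum_abs_pairing_le (a b : Dy → ℝ) :
    ∑' I : Dy, ENNReal.ofReal (|a I| * |b I| * dlen I) ≤ slNorm a * h1Norm b := by
  have key : ∀ I : Dy, ENNReal.ofReal (|a I| * |b I| * dlen I)
      = ∫⁻ x in Set.Ico (0:ℝ) 1,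
          Set.indicator (dint I) (fun _ => ENNReal.ofReal (|a I| * |b I|)) x := by
    intro I
    rw [lintegral_indicator (measurableSet_dint I), setLIntegral_const,
      Measure.restrict_apply (measurableSet_dint I),
      Set.inter_eq_self_of_subset_left (dint_subset I), volume_dint,
      ← ENNReal.ofReal_mul (by positivity)]
  have hmeas : ∀ I : Dy, AEMeasurable
      (fun x => Set.indicator (dint I) (fun _ => ENNReal.ofReal (|a I| * |b I|)) x)
      (volume.restrict (Set.Ico (0:ℝ) 1)) := fun I =>
    (measurable_const.indicator (measurableSet_dint I)).aemeasurable
  calc ∑' I : Dy, ENNReal.ofReal (|a I| * |b I| * dlen I)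
      = ∫⁻ x in Set.Ico (0:ℝ) 1, ∑' I : Dy,
          Set.indicator (dint I) (fun _ => ENNReal.ofReal (|a I| * |b I|)) x :=
        (tsum_congr key).trans (lintegral_tsum hmeas).symm
    _ ≤ ∫⁻ x in Set.Ico (0:ℝ) 1, slNorm a * sqFn b x ^ (1/2 : ℝ) := by
        apply lintegral_mono
        intro x
        set u : Dy → ℝ≥0∞ := fun I =>
          Set.indicator (dint I) (fun _ => ENNReal.ofReal (a I ^ 2)) x with hu
        set v : Dy → ℝ≥0∞ := fun I =>
          Set.indicator (dint I) (fun _ => ENNReal.ofReal (b I ^ 2)) x with hv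
        have hterm : ∀ I : Dy,
            Set.indicator (dint I) (fun _ => ENNReal.ofReal (|a I| * |b I|)) x
              = u I ^ (1/2:ℝ) * v I ^ (1/2:ℝ) := by
          intro I
          by_cases hx : x ∈ dint I
          · simp only [hu, hv, Set.indicator_of_mem hx, sqrt_ofReal_sq,
              ← ENNReal.ofReal_mul (abs_nonneg _)]
          · simp only [hu, hv, Set.indicator_of_notMem hx,
              ENNReal.zero_rpow_of_pos (by norm_num : (0:ℝ) < 1/2), mul_zero]
        have hconj : Real.HolderConjugate 2 2 := Real.HolderConjugate.two_two
        have hCS := ENNReal.lintegral_mul_le_Lp_mul_Lq (Measure.count : Measure Dy) hconj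
          (measurable_of_countable (fun I => u I ^ (1/2:ℝ))).aemeasurable
          (measurable_of_countable (fun I => v I ^ (1/2:ℝ))).aemeasurable
        simp only [Pi.mul_apply, lintegral_count] at hCS
        have hpow : ∀ w : ℝ≥0∞, (w ^ (1/2:ℝ)) ^ (2:ℝ) = w := by
          intro w
          rw [← ENNReal.rpow_mul]
          norm_num
        calc ∑' I : Dy, Set.indicator (dint I) (fun _ => ENNReal.ofReal (|a I| * |b I|)) x
            = ∑' I : Dy, u I ^ (1/2:ℝ) * v I ^ (1/2:ℝ) := tsum_congr hterm
          _ ≤ (∑' I : Dy, (u I ^ (1/2:ℝ)) ^ (2:ℝ)) ^ (1/2:ℝ)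
              * (∑' I : Dy, (v I ^ (1/2:ℝ)) ^ (2:ℝ)) ^ (1/2:ℝ) := hCS
          _ = (sqFn a x) ^ (1/2:ℝ) * (sqFn b x) ^ (1/2:ℝ) := by
              simp only [hpow]; rfl
          _ ≤ slNorm a * (sqFn b x) ^ (1/2:ℝ) := by
              apply mul_le_mul_left
              exact le_iSup (fun y => sqFn a y ^ (1/2:ℝ)) x
    _ = slNorm a * h1Norm b := lintegral_const_mul _ ((measurable_sqFn b).pow_const _)

lemma abs_term_eq (a b : Dy → ℝ) (I : Dy) :
    |a I * b I * dlen I| = |a I| * |b I| * dlen I := by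
  rw [abs_mul, abs_mul, abs_of_pos (dlen_pos I)]

lemma pairing_summable_abs {a b : Dy → ℝ} (ha : slNorm a ≠ ⊤) (hb : h1Norm b ≠ ⊤) :
    Summable (fun I : Dy => |a I * b I * dlen I|) := by
  have h1 : ∑' I : Dy, ENNReal.ofReal (|a I| * |b I| * dlen I) ≠ ⊤ :=
    ne_top_of_le_ne_top (ENNReal.mul_ne_top ha hb) (tsum_abs_pairing_le a b)
  have h2 := ENNReal.summable_toReal h1
  have heq : ∀ I : Dy, (ENNReal.ofReal (|a I| * |b I| * dlen I)).toReal
      = |a I * b I * dlen I| := by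
    intro I
    have hd := (dlen_pos I).le
    rw [ENNReal.toReal_ofReal (by positivity), abs_term_eq]
  simpa only [heq] using h2

lemma pairing_summable {a b : Dy → ℝ} (ha : slNorm a ≠ ⊤) (hb : h1Norm b ≠ ⊤) :
    Summable (fun I : Dy => a I * b I * dlen I) :=
  (pairing_summable_abs ha hb).of_abs

lemma pairing_abs_le {a b : Dy → ℝ} (ha : slNorm a ≠ ⊤) (hb : h1Norm b ≠ ⊤) :
    |pairing a b| ≤ (slNorm a * h1Norm b).toReal := by
  have hs := pairing_summable_abs ha hb
  have h1 : |pairing a b| ≤ ∑' I : Dy, |a I * b I * dlen I| := by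
    have := norm_tsum_le_tsum_norm (f := fun I : Dy => a I * b I * dlen I)
      (by simpa only [Real.norm_eq_abs] using hs)
    simpa only [Real.norm_eq_abs, pairing] using this
  refine h1.trans ?_
  have h2 : ENNReal.ofReal (∑' I : Dy, |a I * b I * dlen I|)
      ≤ slNorm a * h1Norm b := by
    rw [ENNReal.ofReal_tsum_of_nonneg (fun I => abs_nonneg _) hs]
    refine le_trans (le_of_eq (tsum_congr fun I => by rw [abs_term_eq])) ?_
    exact tsum_abs_pairing_le a b
  have h3 := ENNReal.toReal_mono (ENNReal.mul_ne_top ha hb) h2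
  rwa [ENNReal.toReal_ofReal (tsum_nonneg fun I => abs_nonneg _)] at h3

lemma slNorm_comb (c : ℕ → Dy → ℝ) (hc : ∀ m I, |c m I| ≤ 1) (ω : ℕ → ℝ) (F : Finset ℕ) :
    slNorm (fun I => ∑ m ∈ F, ω m * radem (c m) m I)
      ≤ ENNReal.ofReal (Real.sqrt (∑ m ∈ F, ω m ^ 2)) := by
  set f : Dy → ℝ := fun I => ∑ m ∈ F, ω m * radem (c m) m I with hf
  have hfI : ∀ I : Dy, f I = if dlev I ∈ F then ω (dlev I) * c (dlev I) I else 0 := by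
    intro I
    simp only [hf, radem, mul_ite, mul_zero]
    exact Finset.sum_ite_eq F (dlev I) (fun m => ω m * c m I)
  have hsq : ∀ x : ℝ, sqFn f x ≤ ENNReal.ofReal (∑ m ∈ F, ω m ^ 2) := by
    intro x
    have hterm : ∀ I : Dy,
        Set.indicator (dint I) (fun _ => ENNReal.ofReal (f I ^ 2)) x
          ≤ ∑ m ∈ F, (if dlev I = m
              then Set.indicator (dint I) (fun _ => ENNReal.ofReal (ω m ^ 2)) x else 0) := by
      intro I
      by_cases hIF : dlev I ∈ F
      · refine le_trans ?_ (Finset.single_le_sum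
          (f := fun m => if dlev I = m
            then Set.indicator (dint I) (fun _ => ENNReal.ofReal (ω m ^ 2)) x else 0)
          (fun _ _ => zero_le) hIF)
        simp only [if_pos rfl]
        apply Set.indicator_le_indicator
        apply ENNReal.ofReal_le_ofReal
        rw [hfI I, if_pos hIF, mul_pow]
        have hc2 : c (dlev I) I ^ 2 ≤ 1 := by
          have h := hc (dlev I) I
          calc c (dlev I) I ^ 2 = |c (dlev I) I| ^ 2 := (sq_abs _).symm
            _ ≤ 1 ^ 2 := pow_le_pow_left₀ (abs_nonneg _) h 2
            _ = 1 := one_pow 2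
        nlinarith [sq_nonneg (ω (dlev I))]
      · simp [hfI I, hIF]
    calc sqFn f x
        ≤ ∑' I : Dy, ∑ m ∈ F, (if dlev I = m
            then Set.indicator (dint I) (fun _ => ENNReal.ofReal (ω m ^ 2)) x else 0) :=
          ENNReal.tsum_le_tsum hterm
      _ = ∑ m ∈ F, ∑' I : Dy, (if dlev I = m
            then Set.indicator (dint I) (fun _ => ENNReal.ofReal (ω m ^ 2)) x else 0) :=
          Summable.tsum_finsetSum (fun i _ => ENNReal.summable)
      _ ≤ ∑ m ∈ F, ENNReal.ofReal (ω m ^ 2) :=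
          Finset.sum_le_sum fun m _ => level_tsum_le m x _
      _ = ENNReal.ofReal (∑ m ∈ F, ω m ^ 2) :=
          (ENNReal.ofReal_sum_of_nonneg (fun m _ => sq_nonneg _)).symm
  refine iSup_le fun x => ?_
  calc sqFn f x ^ (1/2 : ℝ) ≤ ENNReal.ofReal (∑ m ∈ F, ω m ^ 2) ^ (1/2 : ℝ) :=
        ENNReal.rpow_le_rpow (hsq x) (by norm_num)
    _ = ENNReal.ofReal (Real.sqrt (∑ m ∈ F, ω m ^ 2)) := by
        rw [ENNReal.ofReal_rpow_of_nonneg (Finset.sum_nonneg fun m _ => sq_nonneg _)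
          (by norm_num), Real.sqrt_eq_rpow]

lemma slNorm_radem {c : Dy → ℝ} (hc : ∀ I, |c I| ≤ 1) (m : ℕ) :
    slNorm (radem c m) ≤ 1 := by
  have h := slNorm_comb (fun _ => c) (fun _ I => hc I) (fun _ => 1) {m}
  simp only [Finset.sum_singleton, one_mul, one_pow, Real.sqrt_one, ENNReal.ofReal_one] at h
  exact h

lemma sum_sq_le_main (T : (Dy → ℝ) →ₗ[ℝ] (Dy → ℝ)) (C : NNReal)
    (hT : ∀ f : Dy → ℝ, slNorm (T f) ≤ (C : ℝ≥0∞) * slNorm f)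
    (g : Dy → ℝ) (hg : h1Norm g ≠ ⊤)
    (c : ℕ → Dy → ℝ) (hc : ∀ m I, |c m I| ≤ 1) (F : Finset ℕ) :
    Real.sqrt (∑ m ∈ F, (pairing (T (radem (c m) m)) g) ^ 2)
      ≤ (C : ℝ) * (h1Norm g).toReal := by
  set p : ℕ → ℝ := fun m => pairing (T (radem (c m) m)) g with hp
  set S : ℝ := ∑ m ∈ F, p m ^ 2 with hS
  have hS0 : 0 ≤ S := Finset.sum_nonneg fun m _ => sq_nonneg _
  have hH0 : (0:ℝ) ≤ (h1Norm g).toReal := ENNReal.toReal_nonneg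
  have hsl : ∀ m, slNorm (T (radem (c m) m)) ≠ ⊤ := by
    intro m
    have h1 : slNorm (T (radem (c m) m)) ≤ (C:ℝ≥0∞) * 1 :=
      (hT _).trans (mul_le_mul_right (slNorm_radem (hc m) m) _)
    exact ne_top_of_le_ne_top (by simp) h1
  set f : Dy → ℝ := ∑ m ∈ F, p m • radem (c m) m with hf
  have hfI : f = fun I => ∑ m ∈ F, p m * radem (c m) m I := by
    funext I
    rw [hf]
    simp [Finset.sum_apply, smul_eq_mul]
  have hslf : slNorm (T f) ≤ (C : ℝ≥0∞) * ENNReal.ofReal (Real.sqrt S) := by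
    refine (hT f).trans (mul_le_mul_right ?_ _)
    rw [hfI]
    exact slNorm_comb c hc p F
  have hslf' : slNorm (T f) ≠ ⊤ := ne_top_of_le_ne_top
    (ENNReal.mul_ne_top ENNReal.coe_ne_top ENNReal.ofReal_ne_top) hslf
  have hTf : T f = ∑ m ∈ F, p m • T (radem (c m) m) := by
    rw [hf, map_sum]
    simp only [_root_.map_smul]
  have hpair : pairing (T f) g = S := by
    have hterm : ∀ I : Dy, (T f) I * g I * dlen I
        = ∑ m ∈ F, p m * ((T (radem (c m) m)) I * g I * dlen I) := by
      intro I
      rw [hTf]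
      simp only [Finset.sum_apply, Pi.smul_apply, smul_eq_mul, Finset.sum_mul]
      exact Finset.sum_congr rfl fun m _ => by ring
    rw [pairing, tsum_congr hterm,
      Summable.tsum_finsetSum (fun m _ => ((pairing_summable (hsl m) hg).mul_left (p m)))]
    simp only [tsum_mul_left]
    rw [hS]
    refine Finset.sum_congr rfl fun m _ => ?_
    have : p m = ∑' I : Dy, (T (radem (c m) m)) I * g I * dlen I := rfl
    rw [this]
    ring
  have hbound : S ≤ (C:ℝ) * Real.sqrt S * (h1Norm g).toReal := by
    calc S = pairing (T f) g := hpair.symm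
      _ ≤ |pairing (T f) g| := le_abs_self _
      _ ≤ (slNorm (T f) * h1Norm g).toReal := pairing_abs_le hslf' hg
      _ ≤ (((C:ℝ≥0∞) * ENNReal.ofReal (Real.sqrt S)) * h1Norm g).toReal := by
          apply ENNReal.toReal_mono
          · exact ENNReal.mul_ne_top
              (ENNReal.mul_ne_top ENNReal.coe_ne_top ENNReal.ofReal_ne_top) hg
          · exact mul_le_mul_left hslf _
      _ = (C:ℝ) * Real.sqrt S * (h1Norm g).toReal := by
          rw [ENNReal.toReal_mul, ENNReal.toReal_mul, ENNReal.coe_toReal,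
            ENNReal.toReal_ofReal (Real.sqrt_nonneg _)]
  have hs := Real.sq_sqrt hS0
  have hs0 : 0 ≤ Real.sqrt S := Real.sqrt_nonneg _
  rcases eq_or_lt_of_le hs0 with h0 | h0
  · rw [← h0]
    positivity
  · have h2 : Real.sqrt S * Real.sqrt S ≤ ((C:ℝ) * (h1Norm g).toReal) * Real.sqrt S := by
      nlinarith [hbound, hs]
    exact le_of_mul_le_mul_right h2 h0

/-- for a bounded operator T on SL^∞ (with bound C), g ∈ H^1 and signs ε,
(Σ_{m=1}^M |⟨T r_m^{(ε)}, g⟩|²)^{1/2} ≤ ‖T‖ ‖g‖_{H^1}; hence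
sup_{‖c‖_∞ ≤ 1} |⟨T r_m^{(c)}, g⟩| → 0 as m → ∞. -/
theorem operator_rademacher_pairing_sq_sum_le
    (T : (Dy → ℝ) →ₗ[ℝ] (Dy → ℝ)) (C : NNReal)
    (hT : ∀ f : Dy → ℝ, slNorm (T f) ≤ (C : ℝ≥0∞) * slNorm f)
    (g : Dy → ℝ) (hg : h1Norm g ≠ ⊤)
    (ε : ℕ → Dy → ℝ) (hε : ∀ m I, |ε m I| = 1) :
    (∀ M : ℕ,
      Real.sqrt (∑ m ∈ Finset.Icc 1 M, (pairing (T (radem (ε m) m)) g) ^ 2)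
        ≤ (C : ℝ) * (h1Norm g).toReal) ∧
    Filter.Tendsto
      (fun m => ⨆ c : {c : Dy → ℝ // ∀ I, |c I| ≤ 1},
        |pairing (T (radem c.val m)) g|)
      Filter.atTop (nhds 0) := by
  have hεle : ∀ m I, |ε m I| ≤ 1 := fun m I => le_of_eq (hε m I)
  constructor
  · intro M
    exact sum_sq_le_main T C hT g hg ε hεle (Finset.Icc 1 M)
  · set K : ℝ := (C : ℝ) * (h1Norm g).toReal with hK
    have hK0 : 0 ≤ K := by positivity
    haveI : Nonempty {c : Dy → ℝ // ∀ I, |c I| ≤ 1} :=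
      ⟨⟨fun _ => 0, fun I => by norm_num⟩⟩
    have hKbd : ∀ (m : ℕ) (c : {c : Dy → ℝ // ∀ I, |c I| ≤ 1}),
        |pairing (T (radem c.val m)) g| ≤ K := by
      intro m c
      have h := sum_sq_le_main T C hT g hg (fun _ => c.val) (fun _ I => c.property I) {m}
      simpa [Finset.sum_singleton, Real.sqrt_sq_eq_abs] using h
    set a : ℕ → ℝ := fun m => ⨆ c : {c : Dy → ℝ // ∀ I, |c I| ≤ 1},
        |pairing (T (radem c.val m)) g| with ha
    have hbdd : ∀ m, BddAbove (Set.range fun c : {c : Dy → ℝ // ∀ I, |c I| ≤ 1} =>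
        |pairing (T (radem c.val m)) g|) := by
      intro m
      exact ⟨K, Set.forall_mem_range.2 fun c => hKbd m c⟩
    have ha0 : ∀ m, 0 ≤ a m := by
      intro m
      exact le_trans (abs_nonneg _) (le_ciSup (hbdd m) ⟨fun _ => 0, fun I => by norm_num⟩)
    have hsum : ∀ F : Finset ℕ, ∑ m ∈ F, a m ^ 2 ≤ K ^ 2 := by
      intro F
      refine le_of_forall_pos_le_add fun η hη => ?_
      set D : ℝ := (F.card : ℝ) * (2 * K + 1) with hD
      have hD0 : 0 ≤ D := by positivity
      set δ : ℝ := min 1 (η / (D + 1)) with hδ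
      have hδ0 : 0 < δ := lt_min one_pos (by positivity)
      have hδ1 : δ ≤ 1 := min_le_left _ _
      have hδ2 : δ * (D + 1) ≤ η := by
        have h1 : δ ≤ η / (D + 1) := min_le_right _ _
        have h2 : (0:ℝ) < D + 1 := by linarith
        calc δ * (D + 1) ≤ (η / (D + 1)) * (D + 1) := by
              exact mul_le_mul_of_nonneg_right h1 h2.le
          _ = η := by field_simp
      have hch : ∀ m : ℕ, ∃ c : {c : Dy → ℝ // ∀ I, |c I| ≤ 1},
          a m - δ < |pairing (T (radem c.val m)) g| := by
        intro m
        exact exists_lt_of_lt_ciSup (by linarith [hδ0] : a m - δ < a m)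
      choose cm hcm using hch
      set p : ℕ → ℝ := fun m => pairing (T (radem (cm m).val m)) g with hp
      have hmain : ∑ m ∈ F, p m ^ 2 ≤ K ^ 2 := by
        have h := sum_sq_le_main T C hT g hg (fun m => (cm m).val)
          (fun m I => (cm m).property I) F
        have hS0 : 0 ≤ ∑ m ∈ F, p m ^ 2 := Finset.sum_nonneg fun m _ => sq_nonneg _
        calc ∑ m ∈ F, p m ^ 2 = Real.sqrt (∑ m ∈ F, p m ^ 2) ^ 2 :=
              (Real.sq_sqrt hS0).symm
          _ ≤ K ^ 2 := pow_le_pow_left₀ (Real.sqrt_nonneg _) h 2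
      have hterm : ∀ m ∈ F, a m ^ 2 ≤ p m ^ 2 + δ * (2 * K + 1) := by
        intro m _
        have h1 : a m ≤ |p m| + δ := by linarith [hcm m]
        have h2 : |p m| ≤ K := hKbd m (cm m)
        have h3 : a m ^ 2 ≤ (|p m| + δ) ^ 2 := pow_le_pow_left₀ (ha0 m) h1 2
        have h4 : |p m| ^ 2 = p m ^ 2 := sq_abs _
        nlinarith [abs_nonneg (p m), hδ0.le, hδ1]
      calc ∑ m ∈ F, a m ^ 2 ≤ ∑ m ∈ F, (p m ^ 2 + δ * (2 * K + 1)) :=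
            Finset.sum_le_sum hterm
        _ = ∑ m ∈ F, p m ^ 2 + (F.card : ℝ) * (δ * (2 * K + 1)) := by
            rw [Finset.sum_add_distrib, Finset.sum_const, nsmul_eq_mul]
        _ ≤ K ^ 2 + η := by
            have : (F.card : ℝ) * (δ * (2 * K + 1)) = δ * D := by rw [hD]; ring
            rw [this]
            have : δ * D ≤ δ * (D + 1) := by nlinarith [hδ0.le]
            linarith [hmain, hδ2]
    have hsummable : Summable (fun m => a m ^ 2) :=
      summable_of_sum_le (fun m => sq_nonneg (a m)) hsum
    have htend : Filter.Tendsto (fun m => a m ^ 2) Filter.atTop (nhds 0) :=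
      hsummable.tendsto_atTop_zero
    have htend2 : Filter.Tendsto (fun m => Real.sqrt (a m ^ 2)) Filter.atTop (nhds 0) := by
      have := (Real.continuous_sqrt.tendsto 0).comp htend
      simpa [Function.comp_def] using this
    refine htend2.congr fun m => ?_
    exact Real.sqrt_sq (ha0 m)


end
end

section
/- Let (ℬ_I : I ∈ ℐ) satisfy Jones' conditions (J1)–(J4) with ℬ_I ⊂ 𝒟, and define the block basis b_I = Σ_{K∈ℬ_I} h_K. Then the operator B : SL^∞ → SL^∞, B f = Σ_{I∈ℐ} (⟨f, h_I⟩/‖h_I‖₂²) b_I, satisfies ‖B f‖_{SL^∞} ≤ ‖f‖_{SL^∞} for all f ∈ SL^∞. -/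
/- Setup: dyadic intervals on [0,1), L^∞-normalized Haar coefficients, the SL^∞
square-function norm, the dyadic H^1 norm, and the L² pairing, all expressed on
the space `Dy → ℝ` of Haar coefficient sequences. -/

open MeasureTheory Filter ENNReal

noncomputable section

open scoped ENNReal

/-- The set B_I = ⋃_{K ∈ ℬ_I} K for a collection ℬ_I of dyadic intervals. -/
def unionBD (ℬ : Dy → Set Dy) (I : Dy) : Set ℝ := ⋃ K ∈ ℬ I, dint K

/-- Jones' compatibility conditions (J1)–(J4) with constant κ for a family
(ℬ_I : I ∈ ℐ) of collections of dyadic intervals. -/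
def JonesD (κ : ℝ≥0∞) (ℐ : Set Dy) (ℬ : Dy → Set Dy) : Prop :=
  -- (J1): finitely many building blocks (dyadic intervals are automatically
  -- measurable, nested and of positive measure).
  (Set.Finite (⋃ I ∈ ℐ, ℬ I)) ∧
  -- (J2): each ℬ_I is nonempty with pairwise disjoint members; distinct
  -- collections are disjoint.
  (∀ I ∈ ℐ, (ℬ I).Nonempty) ∧
  (∀ I ∈ ℐ, (ℬ I).Pairwise fun K K' => Disjoint (dint K) (dint K')) ∧
  (∀ I₀ ∈ ℐ, ∀ I₁ ∈ ℐ, I₀ ≠ I₁ → Disjoint (ℬ I₀) (ℬ I₁)) ∧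
  -- (J3):
  (∀ I₀ ∈ ℐ, ∀ I₁ ∈ ℐ, Disjoint (dint I₀) (dint I₁) →
    Disjoint (unionBD ℬ I₀) (unionBD ℬ I₁)) ∧
  (∀ I₀ ∈ ℐ, ∀ I₁ ∈ ℐ, dint I₀ ⊆ dint I₁ → unionBD ℬ I₀ ⊆ unionBD ℬ I₁) ∧
  -- (J4):
  (∀ I₀ ∈ ℐ, ∀ I ∈ ℐ, dint I₀ ⊆ dint I → ∀ K ∈ ℬ I,
    κ⁻¹ * (MeasureTheory.volume (unionBD ℬ I₀) / MeasureTheory.volume (unionBD ℬ I))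
      ≤ MeasureTheory.volume (dint K ∩ unionBD ℬ I₀) / MeasureTheory.volume (dint K))

/-- The Haar coefficients of B f = Σ_{I ∈ ℐ} (⟨f, h_I⟩/‖h_I‖₂²) b_I, where
b_I = Σ_{K ∈ ℬ_I} h_K: the coefficient of h_K is a_I for the (unique) I ∈ ℐ
with K ∈ ℬ_I. -/
def Bop (ℐ : Set Dy) (ℬ : Dy → Set Dy) (a : Dy → ℝ) : Dy → ℝ :=
  fun K => ∑' I : {I : Dy // I ∈ ℐ ∧ K ∈ ℬ I}, a I.val

/-- The Haar coefficients of Q f = Σ_{I ∈ ℐ} (⟨f, b_I⟩/‖b_I‖₂²) h_I: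
the coefficient of h_I (I ∈ ℐ) is (Σ_{K ∈ ℬ_I} a_K |K|) / (Σ_{K ∈ ℬ_I} |K|). -/
def Qop (ℐ : Set Dy) (ℬ : Dy → Set Dy) (a : Dy → ℝ) : Dy → ℝ :=
  fun I => Set.indicator ℐ
    (fun _ => (∑' K : ℬ I, a K.val * dlen K.val) / (∑' K : ℬ I, dlen K.val)) I

lemma dint_nonempty (I : Dy) : (dint I).Nonempty := by
  refine ⟨(I.val.2 : ℝ) / 2 ^ I.val.1, le_refl _, ?_⟩
  have h2 : (0:ℝ) < 2 ^ I.val.1 := by positivity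
  rw [div_lt_div_iff_of_pos_right h2]; linarith

lemma dint_subset_s10 {I J : Dy} (h : dlev J ≤ dlev I) {x : ℝ}
    (hxI : x ∈ dint I) (hxJ : x ∈ dint J) : dint I ⊆ dint J := by
  obtain ⟨⟨n, k⟩, hk⟩ := I
  obtain ⟨⟨m, l⟩, hl⟩ := J
  simp only [dlev] at h
  obtain ⟨d, rfl⟩ : ∃ d, n = m + d := ⟨n - m, by omega⟩
  simp only [dint, Set.mem_Ico] at hxI hxJ ⊢
  have h2m : (0:ℝ) < 2 ^ m := by positivity
  have h2d : (0:ℝ) < 2 ^ d := by positivity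
  have h2n : (0:ℝ) < 2 ^ (m + d) := by positivity
  have hpow : (2:ℝ) ^ (m + d) = 2 ^ m * 2 ^ d := pow_add 2 m d
  have h1 : (l:ℝ) * 2 ^ d < k + 1 := by
    have := lt_of_le_of_lt hxJ.1 hxI.2
    rw [div_lt_div_iff₀ h2m h2n] at this
    rw [hpow] at this; nlinarith
  have h1' : l * 2 ^ d ≤ k := by
    have : ((l * 2 ^ d : ℕ) : ℝ) < ((k + 1 : ℕ) : ℝ) := by push_cast; linarith
    have := Nat.cast_lt.mp this; omega
  have h2 : (k:ℝ) < (l + 1) * 2 ^ d := by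
    have := lt_of_le_of_lt hxI.1 hxJ.2
    rw [div_lt_div_iff₀ h2n h2m] at this
    rw [hpow] at this; nlinarith
  have h2' : k + 1 ≤ (l + 1) * 2 ^ d := by
    have : ((k:ℕ) : ℝ) < (((l + 1) * 2 ^ d : ℕ) : ℝ) := by push_cast; linarith
    have := Nat.cast_lt.mp this; omega
  have hc1 : ((l * 2 ^ d : ℕ) : ℝ) ≤ (k : ℝ) := by exact_mod_cast h1'
  have hc2 : ((k:ℝ) + 1) ≤ (((l + 1) * 2 ^ d : ℕ) : ℝ) := by exact_mod_cast h2'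
  push_cast at hc1 hc2
  intro z hz
  simp only [Set.mem_Ico] at hz ⊢
  have e1 : (l:ℝ) / 2 ^ m ≤ (k:ℝ) / 2 ^ (m + d) := by
    rw [div_le_div_iff₀ h2m h2n, hpow]; nlinarith
  have e2 : ((k:ℝ) + 1) / 2 ^ (m + d) ≤ ((l:ℝ) + 1) / 2 ^ m := by
    rw [div_le_div_iff₀ h2n h2m, hpow]; nlinarith
  exact ⟨le_trans e1 hz.1, lt_of_lt_of_le hz.2 e2⟩

lemma Bop_eq {ℐ : Set Dy} {ℬ : Dy → Set Dy} (a : Dy → ℝ)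
    (hcd : ∀ I₀ ∈ ℐ, ∀ I₁ ∈ ℐ, I₀ ≠ I₁ → Disjoint (ℬ I₀) (ℬ I₁))
    {I K : Dy} (hI : I ∈ ℐ) (hK : K ∈ ℬ I) : Bop ℐ ℬ a K = a I := by
  have huniq : ∀ b : {I' : Dy // I' ∈ ℐ ∧ K ∈ ℬ I'}, b = ⟨I, hI, hK⟩ := by
    rintro ⟨I', hI', hK'⟩
    apply Subtype.ext
    by_contra hne
    exact Set.disjoint_left.mp (hcd I' hI' I hI hne) hK' hK
  rw [Bop, tsum_eq_single (⟨I, hI, hK⟩ : {I' : Dy // I' ∈ ℐ ∧ K ∈ ℬ I'})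
    (fun b hb => absurd (huniq b) hb)]

lemma Bop_eq_zero {ℐ : Set Dy} {ℬ : Dy → Set Dy} (a : Dy → ℝ)
    {K : Dy} (hno : ¬ ∃ I ∈ ℐ, K ∈ ℬ I) : Bop ℐ ℬ a K = 0 := by
  have : IsEmpty {I' : Dy // I' ∈ ℐ ∧ K ∈ ℬ I'} :=
    ⟨fun b => hno ⟨b.1, b.2.1, b.2.2⟩⟩
  exact tsum_empty

/-- under Jones' conditions, the block-basis operator
B f = Σ_{I∈ℐ} (⟨f,h_I⟩/‖h_I‖₂²) b_I satisfies ‖Bf‖_{SL^∞} ≤ ‖f‖_{SL^∞}. -/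
theorem slNorm_Bop_le (κ : ℝ≥0∞) (ℐ : Set Dy) (ℬ : Dy → Set Dy)
    (h : JonesD κ ℐ ℬ) (a : Dy → ℝ) :
    slNorm (Bop ℐ ℬ a) ≤ slNorm a := by
  classical
  obtain ⟨hT, hne, hpd, hcd, hJ3d, -, -⟩ := h
  rw [slNorm]
  apply iSup_le
  intro x
  suffices hkey : ∃ y, sqFn (Bop ℐ ℬ a) x ≤ sqFn a y by
    obtain ⟨y, hy⟩ := hkey
    calc sqFn (Bop ℐ ℬ a) x ^ (1/2:ℝ)
        ≤ sqFn a y ^ (1/2:ℝ) := ENNReal.rpow_le_rpow hy (by norm_num)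
      _ ≤ slNorm a := le_iSup (fun y => sqFn a y ^ (1/2:ℝ)) y
  set b := Bop ℐ ℬ a with hb
  set F : Dy → ℝ≥0∞ :=
    fun K => Set.indicator (dint K) (fun _ => ENNReal.ofReal (b K ^ 2)) x with hF
  -- the finite set of building blocks
  set sfin : Finset Dy := hT.toFinset with hsfin
  have hsum1 : sqFn b x = ∑ K ∈ sfin, F K := by
    apply tsum_eq_sum
    intro K hK
    have hno : ¬ ∃ I ∈ ℐ, K ∈ ℬ I := by
      intro ⟨I, hI, hKI⟩
      exact hK (hT.mem_toFinset.mpr (Set.mem_biUnion hI hKI))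
    have : b K = 0 := Bop_eq_zero a hno
    simp [hF, this]
  set s' : Finset Dy := sfin.filter (fun K => x ∈ dint K) with hs'
  have hsum2 : ∑ K ∈ sfin, F K = ∑ K ∈ s', F K := by
    symm
    apply Finset.sum_filter_of_ne
    intro K _ hFK
    by_contra hx
    exact hFK (Set.indicator_of_notMem hx _)
  -- the chain S
  set S : Set Dy := {I | I ∈ ℐ ∧ x ∈ unionBD ℬ I} with hS
  have hex : ∀ I : Dy, ∃ K : Dy, I ∈ S → K ∈ ℬ I ∧ x ∈ dint K := by
    intro I
    by_cases hI : I ∈ S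
    · obtain ⟨K, hK, hxK⟩ := Set.mem_iUnion₂.mp hI.2
      exact ⟨K, fun _ => ⟨hK, hxK⟩⟩
    · exact ⟨⟨(0,0), by norm_num⟩, fun hmem => absurd hmem hI⟩
  choose ψ hψ using hex
  have hinj : Set.InjOn ψ S := by
    intro I hI I' hI' hII
    by_contra hne
    exact Set.disjoint_left.mp (hcd I hI.1 I' hI'.1 hne)
      (hψ I hI).1 (hII ▸ (hψ I' hI').1)
  have hSfin : S.Finite := by
    apply Set.Finite.of_finite_image _ hinj
    apply hT.subset
    rintro - ⟨I, hI, rfl⟩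
    exact Set.mem_biUnion hI.1 (hψ I hI).1
  set Sfin : Finset Dy := hSfin.toFinset with hSfinset
  have himg : s' = Sfin.image ψ := by
    ext K
    simp only [hs', Finset.mem_filter, Finset.mem_image, hsfin, hSfinset, hT.mem_toFinset,
      hSfin.mem_toFinset]
    constructor
    · rintro ⟨hKT, hxK⟩
      obtain ⟨I, hI, hKI⟩ := Set.mem_iUnion₂.mp hKT
      have hIS : I ∈ S := ⟨hI, Set.mem_biUnion hKI hxK⟩
      refine ⟨I, hIS, ?_⟩
      by_contra hne
      exact Set.disjoint_left.mp
        (hpd I hI (hψ I hIS).1 hKI hne)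
        (hψ I hIS).2 hxK
    · rintro ⟨I, hIS, rfl⟩
      exact ⟨Set.mem_biUnion hIS.1 (hψ I hIS).1, (hψ I hIS).2⟩
  have hsum3 : ∑ K ∈ s', F K = ∑ I ∈ Sfin, ENNReal.ofReal (a I ^ 2) := by
    rw [himg, Finset.sum_image (fun I hI I' hI' => hinj (hSfin.mem_toFinset.mp hI)
      (hSfin.mem_toFinset.mp hI'))]
    apply Finset.sum_congr rfl
    intro I hI
    have hIS : I ∈ S := hSfin.mem_toFinset.mp hI
    rw [hF]
    simp only
    rw [Set.indicator_of_mem (hψ I hIS).2, hb, Bop_eq a hcd hIS.1 (hψ I hIS).1]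
  rcases S.eq_empty_or_nonempty with hSe | hSne
  · refine ⟨0, ?_⟩
    rw [hsum1, hsum2, hsum3]
    have : Sfin = ∅ := by simp [hSfinset, hSe]
    simp [this]
  · obtain ⟨Im, hIm, hmax⟩ := Set.exists_max_image S dlev hSfin hSne
    obtain ⟨y, hy⟩ := dint_nonempty Im
    refine ⟨y, ?_⟩
    have hymem : ∀ I ∈ S, y ∈ dint I := by
      intro I hI
      have hnd : ¬ Disjoint (dint Im) (dint I) := by
        intro hd
        exact Set.not_disjoint_iff.mpr ⟨x, hIm.2, hI.2⟩
          (hJ3d Im hIm.1 I hI.1 hd)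
      obtain ⟨z, hzm, hzI⟩ := Set.not_disjoint_iff.mp hnd
      exact dint_subset_s10 (hmax I hI) hzm hzI hy
    rw [hsum1, hsum2, hsum3]
    calc ∑ I ∈ Sfin, ENNReal.ofReal (a I ^ 2)
        = ∑ I ∈ Sfin, Set.indicator (dint I) (fun _ => ENNReal.ofReal (a I ^ 2)) y := by
          apply Finset.sum_congr rfl
          intro I hI
          rw [Set.indicator_of_mem (hymem I (hSfin.mem_toFinset.mp hI))]
      _ ≤ sqFn a y := ENNReal.sum_le_tsum Sfin

end
end

section
/- SL^∞ is isomorphic to the ℓ^∞-direct sum (Σ_{k∈ℕ} SL^∞)_∞ of countably many copies of itself. -/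
/- Setup: dyadic intervals on [0,1), L^∞-normalized Haar coefficients, the SL^∞
square-function norm, the dyadic H^1 norm, and the L² pairing, all expressed on
the space `Dy → ℝ` of Haar coefficient sequences. -/

open MeasureTheory Filter ENNReal

noncomputable section

namespace SL19


def top : Dy := ⟨(0,0), by norm_num⟩
def Lc (I : Dy) : Dy := ⟨(I.1.1+1, I.1.2), lt_of_lt_of_le I.2 (by
  simpa using Nat.pow_le_pow_right (by norm_num) (Nat.le_succ _))⟩
def Rc (I : Dy) : Dy := ⟨(I.1.1+1, I.1.2 + 2^I.1.1), by
  have := I.2; rw [pow_succ]; omega⟩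

def encC : ℕ → Dy
  | 0 => top
  | t+1 => Rc (encC t)

def encS : ℕ → Dy → Dy
  | 0, I => Lc I
  | m+1, I => Rc (encS m I)

def enc : ℕ ⊕ ℕ × Dy → Dy
  | Sum.inl t => encC t
  | Sum.inr (m, I) => encS m I

def shiftR : ℕ ⊕ ℕ × Dy → ℕ ⊕ ℕ × Dy
  | Sum.inl t => Sum.inl (t+1)
  | Sum.inr (m, I) => Sum.inr (m+1, I)

def go : (n k : ℕ) → k < 2^n → ℕ ⊕ ℕ × Dy
  | 0, _, _ => Sum.inl 0
  | n+1, k, h =>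
    if hk : k < 2^n then Sum.inr (0, ⟨(n,k), hk⟩)
    else shiftR (go n (k - 2^n) (by rw [pow_succ] at h; omega))

def dec (I : Dy) : ℕ ⊕ ℕ × Dy := go I.1.1 I.1.2 I.2

lemma dec_top : dec top = Sum.inl 0 := rfl

lemma dec_Lc (I : Dy) : dec (Lc I) = Sum.inr (0, I) := by
  have h := I.2
  simp only [dec, Lc, go, h, dif_pos]

lemma dec_Rc (I : Dy) : dec (Rc I) = shiftR (dec I) := by
  have h := I.2
  have h2 : ¬ (I.1.2 + 2^I.1.1 < 2^I.1.1) := by omega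
  simp only [dec, Rc, go, h2, dif_neg, not_false_iff]
  congr 1
  simp only [Nat.add_sub_cancel]

lemma enc_shiftR (z : ℕ ⊕ ℕ × Dy) : enc (shiftR z) = Rc (enc z) := by
  rcases z with t | ⟨m, I⟩ <;> rfl

/-- Case analysis: every dyadic interval is top, a left child, or a right child. -/
lemma cases_Dy (I : Dy) : I = top ∨ (∃ J, I = Lc J) ∨ (∃ J, I = Rc J) := by
  obtain ⟨⟨n, k⟩, h⟩ := I
  cases n with
  | zero =>
    left
    have : k = 0 := by simpa using h
    subst this; rfl
  | succ n =>
    right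
    by_cases hk : k < 2^n
    · left; exact ⟨⟨(n,k), hk⟩, rfl⟩
    · right
      refine ⟨⟨(n, k - 2^n), by simp only at h ⊢; rw [pow_succ] at h; omega⟩, ?_⟩
      simp only [Rc, Subtype.mk.injEq, Prod.mk.injEq]
      simp only at h hk ⊢
      exact ⟨trivial, by omega⟩

lemma enc_dec (I : Dy) : enc (dec I) = I := by
  obtain ⟨⟨n, k⟩, h⟩ := I
  induction n generalizing k with
  | zero =>
    have : k = 0 := by simpa using h
    subst this; rfl
  | succ n ih =>
    rcases cases_Dy ⟨(n+1, k), h⟩ with h0 | ⟨J, hJ⟩ | ⟨J, hJ⟩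
    · exfalso
      have := congrArg (fun I : Dy => I.1.1) h0
      simp [top] at this
    · rw [hJ, dec_Lc]; rfl
    · rw [hJ, dec_Rc, enc_shiftR]
      have hn : J.1.1 = n := by
        have := congrArg (fun I : Dy => I.1.1) hJ
        simpa [Rc] using this.symm
      congr 1
      obtain ⟨⟨n', k'⟩, h'⟩ := J
      simp only at hn
      subst hn
      exact ih k' h'

lemma dec_encC (t : ℕ) : dec (encC t) = Sum.inl t := by
  induction t with
  | zero => rfl
  | succ t ih => rw [encC, dec_Rc, ih]; rfl

lemma dec_encS (m : ℕ) (I : Dy) : dec (encS m I) = Sum.inr (m, I) := by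
  induction m with
  | zero => exact dec_Lc I
  | succ m ih => rw [encS, dec_Rc, ih]; rfl

-- point maps
def pmap : ℕ → ℝ → ℝ
  | 0, x => x / 2
  | m+1, x => (1 + pmap m x) / 2

lemma pmap_eq (m : ℕ) (x : ℝ) : pmap m x = 1 - (1/2)^m + (1/2)^(m+1) * x := by
  induction m with
  | zero => simp [pmap]; ring
  | succ m ih => rw [pmap, ih]; ring

lemma dint_subset (I : Dy) : dint I ⊆ Set.Ico (0:ℝ) 1 := by
  rintro x ⟨h1, h2⟩
  have hp : (0:ℝ) < 2 ^ I.1.1 := by positivity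
  constructor
  · exact le_trans (by positivity) h1
  · have hk : (I.1.2 : ℝ) + 1 ≤ 2 ^ I.1.1 := by
      have := I.2
      push_cast
      exact_mod_cast Nat.succ_le_of_lt this
    calc x < ((I.1.2:ℝ)+1) / 2^I.1.1 := h2
    _ ≤ 1 := by rw [div_le_one hp]; exact hk

lemma mem_Lc {x : ℝ} {I : Dy} (h : x ∈ dint I) : x/2 ∈ dint (Lc I) := by
  obtain ⟨h1, h2⟩ := h
  have hp : (0:ℝ) < 2 ^ I.1.1 := by positivity
  constructor
  · show ((I.1.2:ℝ)) / 2^(I.1.1+1) ≤ x/2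
    rw [pow_succ]
    rw [div_le_div_iff₀ (by positivity) (by norm_num)]
    rw [div_le_iff₀ hp] at h1
    nlinarith
  · show x/2 < ((I.1.2:ℝ)+1) / 2^(I.1.1+1)
    rw [pow_succ]
    rw [div_lt_div_iff₀ (by norm_num) (by positivity)]
    rw [lt_div_iff₀ hp] at h2
    nlinarith

lemma mem_Rc {x : ℝ} {I : Dy} (h : x ∈ dint I) : (1+x)/2 ∈ dint (Rc I) := by
  obtain ⟨h1, h2⟩ := h
  have hp : (0:ℝ) < 2 ^ I.1.1 := by positivity
  constructor
  · show ((I.1.2 + 2^I.1.1 : ℕ):ℝ) / 2^(I.1.1+1) ≤ (1+x)/2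
    push_cast
    rw [pow_succ]
    rw [div_le_div_iff₀ (by positivity) (by norm_num)]
    rw [div_le_iff₀ hp] at h1
    nlinarith
  · show (1+x)/2 < (((I.1.2 + 2^I.1.1 : ℕ):ℝ)+1) / 2^(I.1.1+1)
    push_cast
    rw [pow_succ]
    rw [div_lt_div_iff₀ (by norm_num) (by positivity)]
    rw [lt_div_iff₀ hp] at h2
    nlinarith

lemma mem_Rc_inv {x : ℝ} {I : Dy} (h : (1+x)/2 ∈ dint (Rc I)) : x ∈ dint I := by
  obtain ⟨h1, h2⟩ := h
  have hp : (0:ℝ) < 2 ^ I.1.1 := by positivity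
  simp only [Rc] at h1 h2
  push_cast at h1 h2
  rw [pow_succ] at h1 h2
  constructor
  · rw [div_le_div_iff₀ (by positivity) (by norm_num)] at h1
    rw [div_le_iff₀ hp]
    nlinarith
  · rw [div_lt_div_iff₀ (by positivity) (by positivity)] at h2
    rw [lt_div_iff₀ hp]
    nlinarith

lemma mem_Lc_inv {x : ℝ} {I : Dy} (h : x/2 ∈ dint (Lc I)) : x ∈ dint I := by
  obtain ⟨h1, h2⟩ := h
  have hp : (0:ℝ) < 2 ^ I.1.1 := by positivity
  simp only [Lc] at h1 h2
  push_cast at h1 h2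
  rw [pow_succ] at h1 h2
  constructor
  · rw [div_le_div_iff₀ (by positivity) (by norm_num)] at h1
    rw [div_le_iff₀ hp]
    nlinarith
  · rw [div_lt_div_iff₀ (by positivity) (by positivity)] at h2
    rw [lt_div_iff₀ hp]
    nlinarith

lemma mem_encS {x : ℝ} {I : Dy} (m : ℕ) (h : x ∈ dint I) :
    pmap m x ∈ dint (encS m I) := by
  induction m with
  | zero => exact mem_Lc h
  | succ m ih => exact mem_Rc ih

lemma mem_encS_inv {x : ℝ} {I : Dy} (m : ℕ) (h : pmap m x ∈ dint (encS m I)) :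
    x ∈ dint I := by
  induction m with
  | zero => exact mem_Lc_inv h
  | succ m ih => exact ih (mem_Rc_inv h)

/-- range bound for the subtree copies -/
lemma encS_range {x : ℝ} {I : Dy} (m : ℕ) (h : x ∈ dint (encS m I)) :
    1 - (1/2:ℝ)^m ≤ x ∧ x < 1 - (1/2)^(m+1) := by
  induction m generalizing x with
  | zero =>
    have hL : x ∈ dint (Lc I) := h
    obtain ⟨h1, h2⟩ := hL
    have hp : (0:ℝ) < 2 ^ I.1.1 := by positivity
    have hk : (I.1.2 : ℝ) + 1 ≤ 2 ^ I.1.1 := by exact_mod_cast Nat.succ_le_of_lt I.2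
    have e2 : ((2:ℝ) ^ (Lc I).1.1) = 2 ^ I.1.1 * 2 := by
      show ((2:ℝ) ^ (I.1.1+1)) = _
      rw [pow_succ]
    have e1 : ((Lc I).1.2 : ℝ) = (I.1.2 : ℝ) := rfl
    rw [e1, e2] at h1 h2
    constructor
    · have : (0:ℝ) ≤ (I.1.2:ℝ) / (2^I.1.1 * 2) := by positivity
      simp only [pow_zero]
      linarith
    · have h4 : ((I.1.2:ℝ)+1) / (2^I.1.1 * 2) ≤ 1/2 := by
        rw [div_le_div_iff₀ (by positivity) (by norm_num)]
        nlinarith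
      norm_num
      linarith
  | succ m ih =>
    have hx : (1 + (2*x-1))/2 ∈ dint (Rc (encS m I)) := by
      have : (1 + (2*x-1))/2 = x := by ring
      rw [this]; exact h
    have h' := mem_Rc_inv hx
    obtain ⟨a, b⟩ := ih h'
    have e : (1/2:ℝ)^(m+1) = (1/2)^m * (1/2) := pow_succ _ _
    have e2 : (1/2:ℝ)^(m+2) = (1/2)^m * (1/2) * (1/2) := by rw [pow_succ, pow_succ]
    constructor
    · rw [e]; nlinarith
    · rw [e2]; nlinarith


lemma dint_top : dint top = Set.Ico (0:ℝ) 1 := by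
  simp [dint, top]

lemma mem_encC (t : ℕ) (x : ℝ) : x ∈ dint (encC t) ↔ (1 - (1/2:ℝ)^t ≤ x ∧ x < 1) := by
  induction t generalizing x with
  | zero =>
    have e : dint (encC 0) = Set.Ico (0:ℝ) 1 := dint_top
    rw [e]
    norm_num [Set.mem_Ico]
  | succ t ih =>
    have key : x ∈ dint (encC (t+1)) ↔ 2*x - 1 ∈ dint (encC t) := by
      constructor
      · intro h
        apply mem_Rc_inv (I := encC t)
        have : (1 + (2*x-1))/2 = x := by ring
        rw [this]; exact h
      · intro h
        have := mem_Rc (I := encC t) h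
        have e : (1 + (2*x-1))/2 = x := by ring
        rw [e] at this; exact this
    rw [key, ih]
    have e : (1/2:ℝ)^(t+1) = (1/2)^t * (1/2) := pow_succ _ _
    rw [e]
    constructor <;> rintro ⟨h1, h2⟩ <;> constructor <;> linarith

lemma pmap_range {x : ℝ} (m : ℕ) (hx : x ∈ Set.Ico (0:ℝ) 1) :
    1 - (1/2:ℝ)^m ≤ pmap m x ∧ pmap m x < 1 - (1/2)^(m+1) := by
  obtain ⟨h0, h1⟩ := hx
  rw [pmap_eq]
  have hp : (0:ℝ) < (1/2:ℝ)^(m+1) := by positivity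
  have e : (1/2:ℝ)^(m+1) = (1/2)^m * (1/2) := pow_succ _ _
  constructor
  · nlinarith
  · nlinarith

/-- decomposition of a point of [0,1) -/
lemma exists_pmap {x : ℝ} (hx : x ∈ Set.Ico (0:ℝ) 1) :
    ∃ m x', x' ∈ Set.Ico (0:ℝ) 1 ∧ x = pmap m x' := by
  obtain ⟨h0, h1⟩ := hx
  have hex : ∃ n : ℕ, (1/2:ℝ)^(n+1) < 1 - x := by
    obtain ⟨n, hn⟩ := exists_pow_lt_of_lt_one (by linarith : (0:ℝ) < 1 - x)
      (by norm_num : (1/2:ℝ) < 1)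
    exact ⟨n, lt_of_le_of_lt (pow_le_pow_of_le_one (by norm_num) (by norm_num)
      (Nat.le_succ n)) hn⟩
  classical
  set m := Nat.find hex with hm
  have hfind : (1/2:ℝ)^(m+1) < 1 - x := Nat.find_spec hex
  have hlow : 1 - (1/2:ℝ)^m ≤ x := by
    rcases Nat.eq_zero_or_pos m with h | h
    · rw [h]; simpa using h0
    · have hlt : m - 1 < Nat.find hex := by omega
      have hmin := Nat.find_min hex hlt
      push_neg at hmin
      have h2 : (m-1)+1 = m := by omega
      rw [h2] at hmin
      linarith
  refine ⟨m, (x - (1 - (1/2)^m)) / ((1/2)^(m+1)), ⟨?_, ?_⟩, ?_⟩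
  · apply div_nonneg _ (by positivity)
    linarith
  · rw [div_lt_one (by positivity)]
    have e : (1/2:ℝ)^m = (1/2)^(m+1) * 2 := by rw [pow_succ]; ring
    linarith
  · rw [pmap_eq]
    field_simp
    ring

/-- If a point in the image of `pmap m` lies in a subtree copy of index `s`, then `s = m`. -/
lemma pmap_mem_encS {x' : ℝ} {I : Dy} {m s : ℕ} (hx : x' ∈ Set.Ico (0:ℝ) 1)
    (h : pmap m x' ∈ dint (encS s I)) : s = m ∧ x' ∈ dint I := by
  have hr := encS_range s h
  have hp := pmap_range m hx
  have hsm : s = m := by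
    by_contra hne
    rcases Nat.lt_or_ge s m with hlt | hge
    · -- s < m : then 1-(1/2)^{s+1} ≤ 1-(1/2)^m ≤ pmap m x', contradiction with hr.2
      have : (1/2:ℝ)^m ≤ (1/2)^(s+1) :=
        pow_le_pow_of_le_one (by norm_num) (by norm_num) (by omega)
      linarith [hr.2, hp.1]
    · have hgt : m < s := by omega
      have : (1/2:ℝ)^s ≤ (1/2)^(m+1) :=
        pow_le_pow_of_le_one (by norm_num) (by norm_num) (by omega)
      linarith [hr.1, hp.2]
  subst hsm
  exact ⟨rfl, mem_encS_inv s h⟩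

def Phi : ℕ → Dy → Dy
  | 0, I => match dec I with
    | Sum.inl _ => I
    | Sum.inr (m, I') => encS (2*m+1) I'
  | k+1, I => encS (2*k) I

def Psi (J : Dy) : ℕ × Dy := match dec J with
  | Sum.inl _ => (0, J)
  | Sum.inr (m, I') => if m % 2 = 0 then (m/2 + 1, I') else (0, encS (m/2) I')

lemma Phi_zero (I : Dy) : Phi 0 I = (match dec I with
    | Sum.inl _ => I
    | Sum.inr (m, I') => encS (2*m+1) I') := rfl

lemma Phi_zero_chain {I : Dy} {t : ℕ} (h : dec I = Sum.inl t) : Phi 0 I = I := by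
  rw [Phi_zero, h]

lemma Phi_zero_sub {I I' : Dy} {m : ℕ} (h : dec I = Sum.inr (m, I')) :
    Phi 0 I = encS (2*m+1) I' := by
  rw [Phi_zero, h]

lemma Phi_succ (k : ℕ) (I : Dy) : Phi (k+1) I = encS (2*k) I := rfl

lemma Psi_chain {J : Dy} {t : ℕ} (h : dec J = Sum.inl t) : Psi J = (0, J) := by
  unfold Psi; rw [h]

lemma Psi_sub {J I' : Dy} {m : ℕ} (h : dec J = Sum.inr (m, I')) :
    Psi J = if m % 2 = 0 then (m/2 + 1, I') else (0, encS (m/2) I') := by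
  unfold Psi; rw [h]

lemma Psi_Phi (k : ℕ) (I : Dy) : Psi (Phi k I) = (k, I) := by
  cases k with
  | zero =>
    rcases h : dec I with t | ⟨m, I'⟩
    · rw [Phi_zero_chain h, Psi_chain h]
    · rw [Phi_zero_sub h, Psi_sub (dec_encS _ _)]
      have hodd : (2*m+1) % 2 ≠ 0 := by omega
      rw [if_neg hodd]
      have : (2*m+1)/2 = m := by omega
      rw [this]
      have : encS m I' = I := by
        have := enc_dec I; rw [h] at this; exact this
      rw [this]
  | succ k =>
    rw [Phi_succ, Psi_sub (dec_encS _ _)]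
    have heven : (2*k) % 2 = 0 := by omega
    rw [if_pos heven]
    have : (2*k)/2 = k := by omega
    rw [this]

lemma Phi_Psi (J : Dy) : Phi (Psi J).1 (Psi J).2 = J := by
  rcases h : dec J with t | ⟨m, I'⟩
  · rw [Psi_chain h]
    exact Phi_zero_chain h
  · rw [Psi_sub h]
    have hJ : encS m I' = J := by have := enc_dec J; rw [h] at this; exact this
    by_cases hm : m % 2 = 0
    · rw [if_pos hm]
      simp only
      rw [Phi_succ]
      have : 2 * (m/2) = m := by omega
      rw [this, hJ]
    · rw [if_neg hm]
      simp only
      rw [Phi_zero_sub (dec_encS (m/2) I')]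
      have : 2 * (m/2) + 1 = m := by omega
      rw [this, hJ]

lemma Phi_inj (k : ℕ) : Function.Injective (Phi k) := by
  intro a b hab
  have h1 := Psi_Phi k a
  have h2 := Psi_Phi k b
  rw [hab, h2] at h1
  exact (Prod.mk.injEq _ _ _ _).mp h1 |>.2.symm

lemma encS_inj (m : ℕ) : Function.Injective (encS m) := by
  intro a b hab
  have := dec_encS m a
  rw [hab, dec_encS] at this
  simpa using this.symm


end SL19


namespace SL19

lemma key_le {α : Type*} (f : Dy → ℝ) (x y : ℝ) (sh e : α → Dy) (he : Function.Injective e)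
    (hxy : ∀ p, x ∈ dint (sh p) → y ∈ dint (e p)) :
    (∑' p : α, Set.indicator (dint (sh p)) (fun _ => ENNReal.ofReal ((f (e p)) ^ 2)) x)
      ≤ sqFn f y := by
  have step1 : ∀ p : α,
      Set.indicator (dint (sh p)) (fun _ => ENNReal.ofReal ((f (e p)) ^ 2)) x
        ≤ Set.indicator (dint (e p)) (fun _ => ENNReal.ofReal ((f (e p)) ^ 2)) y := by
    intro p
    by_cases hx : x ∈ dint (sh p)
    · rw [Set.indicator_of_mem hx, Set.indicator_of_mem (hxy p hx)]
    · rw [Set.indicator_of_notMem hx]; exact zero_le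
  calc (∑' p : α, Set.indicator (dint (sh p)) (fun _ => ENNReal.ofReal ((f (e p)) ^ 2)) x)
      ≤ ∑' p : α, Set.indicator (dint (e p)) (fun _ => ENNReal.ofReal ((f (e p)) ^ 2)) y :=
        ENNReal.tsum_le_tsum step1
  _ ≤ sqFn f y := ENNReal.tsum_comp_le_tsum_of_injective he
        (fun J => Set.indicator (dint J) (fun _ => ENNReal.ofReal ((f J) ^ 2)) y)

lemma sqFn_comp_le (f : Dy → ℝ) (e : Dy → Dy) (he : Function.Injective e) (x y : ℝ)
    (hxy : ∀ I, x ∈ dint I → y ∈ dint (e I)) :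
    sqFn (fun I => f (e I)) x ≤ sqFn f y :=
  key_le f x y (fun I => I) e he hxy

lemma sqFn_out (a : Dy → ℝ) {x : ℝ} (hx : x ∉ Set.Ico (0:ℝ) 1) : sqFn a x = 0 := by
  unfold sqFn
  rw [ENNReal.tsum_eq_zero]
  intro I
  rw [Set.indicator_of_notMem (fun h => hx (dint_subset I h))]

lemma sqFn_le_sq (a : Dy → ℝ) (y : ℝ) : sqFn a y ≤ slNorm a ^ (2:ℝ) := by
  have h1 : sqFn a y ^ (1/2:ℝ) ≤ slNorm a := le_iSup (fun x => sqFn a x ^ (1/2:ℝ)) y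
  have h2 := ENNReal.rpow_le_rpow h1 (by norm_num : (0:ℝ) ≤ 2)
  rwa [← ENNReal.rpow_mul, show (1/2:ℝ)*2 = 1 by norm_num, ENNReal.rpow_one] at h2

lemma slNorm_le_pt (g f : Dy → ℝ) (h : ∀ x, ∃ y, sqFn g x ≤ sqFn f y) :
    slNorm g ≤ slNorm f := by
  refine iSup_le fun x => ?_
  obtain ⟨y, hy⟩ := h x
  exact le_trans (ENNReal.rpow_le_rpow hy (by norm_num))
    (le_iSup (fun y => sqFn f y ^ (1/2:ℝ)) y)

lemma U_bound (f : Dy → ℝ) (k : ℕ) : slNorm (fun I => f (Phi k I)) ≤ slNorm f := by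
  apply slNorm_le_pt
  intro x
  cases k with
  | succ k =>
    exact ⟨pmap (2*k) x, sqFn_comp_le f (Phi (k+1)) (Phi_inj _) x _ (fun I hI => by
      rw [Phi_succ]; exact mem_encS _ hI)⟩
  | zero =>
    by_cases hx : x ∈ Set.Ico (0:ℝ) 1
    · obtain ⟨m, x', hx', hxe⟩ := exists_pmap hx
      refine ⟨pmap (2*m+1) x', sqFn_comp_le f (Phi 0) (Phi_inj _) x _ ?_⟩
      intro I hI
      rcases h : dec I with t | ⟨s, I'⟩
      · rw [Phi_zero_chain h]
        have hIC : I = encC t := by have := enc_dec I; rw [h] at this; exact this.symm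
        rw [hIC] at hI ⊢
        rw [mem_encC] at hI ⊢
        obtain ⟨ha, hb⟩ := hI
        have hxr := pmap_range m hx'
        rw [← hxe] at hxr
        have htm : t ≤ m := by
          by_contra hc
          push_neg at hc
          have : (1/2:ℝ)^t ≤ (1/2)^(m+1) :=
            pow_le_pow_of_le_one (by norm_num) (by norm_num) (by omega)
          linarith [hxr.2]
        have hyr := pmap_range (2*m+1) hx'
        have hpw : (1/2:ℝ)^(2*m+1) ≤ (1/2)^t :=
          pow_le_pow_of_le_one (by norm_num) (by norm_num) (by omega)
        constructor
        · linarith [hyr.1]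
        · have : (0:ℝ) < (1/2:ℝ)^(2*m+1+1) := by positivity
          linarith [hyr.2]
      · rw [Phi_zero_sub h]
        have hIS : I = encS s I' := by have := enc_dec I; rw [h] at this; exact this.symm
        rw [hIS] at hI
        rw [hxe] at hI
        obtain ⟨hsm, hI'⟩ := pmap_mem_encS hx' hI
        subst hsm
        exact mem_encS _ hI'
    · exact ⟨x, by rw [sqFn_out _ hx]; exact zero_le⟩

lemma V_bound (F : ℕ → Dy → ℝ) :
    slNorm (fun J => F (Psi J).1 (Psi J).2) ≤ 2 * ⨆ k, slNorm (F k) := by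
  set S := ⨆ k, slNorm (F k) with hS
  set g : Dy → ℝ := fun J => F (Psi J).1 (Psi J).2 with hg
  have hFk : ∀ (k : ℕ) (y : ℝ), sqFn (F k) y ≤ S ^ (2:ℝ) := by
    intro k y
    have h1 : slNorm (F k) ≤ S := by
      rw [hS]; exact le_iSup (fun j => slNorm (F j)) k
    exact le_trans (sqFn_le_sq _ _) (ENNReal.rpow_le_rpow h1 (by norm_num))
  have main : ∀ x, sqFn g x ≤ S ^ (2:ℝ) + S ^ (2:ℝ) := by
    intro x
    by_cases hx : x ∈ Set.Ico (0:ℝ) 1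
    case neg => rw [sqFn_out _ hx]; exact zero_le
    obtain ⟨m, x', hx', hxe⟩ := exists_pmap hx
    set A : Set Dy := Set.range encC with hA
    set term : Dy → ℝ≥0∞ :=
      fun J => Set.indicator (dint J) (fun _ => ENNReal.ofReal ((g J) ^ 2)) x with hterm
    have hsq : sqFn g x = ∑' J : Dy, term J := rfl
    have hsplit : sqFn g x = (∑' J : ↥A, term J.1) + (∑' J : ↥Aᶜ, term J.1) := by
      rw [hsq]
      exact (Summable.tsum_add_tsum_compl (s := A) (f := term)
        ENNReal.summable ENNReal.summable).symm
    have hchain : (∑' J : ↥A, term J.1) ≤ sqFn (F 0) x := by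
      have hterm_eq : ∀ J : ↥A, term J.1 =
          Set.indicator (dint J.1) (fun _ => ENNReal.ofReal ((F 0 J.1) ^ 2)) x := by
        rintro ⟨J, t, rfl⟩
        simp only [hterm, hg]
        rw [Psi_chain (dec_encC t)]
      calc (∑' J : ↥A, term J.1)
          = ∑' J : ↥A, Set.indicator (dint J.1)
              (fun _ => ENNReal.ofReal ((F 0 J.1) ^ 2)) x := tsum_congr hterm_eq
      _ ≤ sqFn (F 0) x := key_le (F 0) x x (fun J : ↥A => J.1) (fun J : ↥A => J.1)
            Subtype.val_injective (fun _ hp => hp)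
    have hSinj : Function.Injective (fun p : ℕ × Dy => encS p.1 p.2) := by
      rintro ⟨a1, a2⟩ ⟨b1, b2⟩ hab
      have h1 := dec_encS a1 a2
      simp only at hab
      rw [hab, dec_encS] at h1
      simpa using h1.symm
    have hrange : Set.range (fun p : ℕ × Dy => encS p.1 p.2) = Aᶜ := by
      ext J
      constructor
      · rintro ⟨⟨s, I'⟩, rfl⟩
        intro hJ
        obtain ⟨t, ht⟩ := hJ
        have h1 := dec_encC t
        rw [ht, dec_encS] at h1
        simp at h1
      · intro hJ
        rcases h : dec J with t | ⟨s, I'⟩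
        · exact absurd ⟨t, by have := enc_dec J; rw [h] at this; exact this⟩ hJ
        · exact ⟨(s, I'), by have := enc_dec J; rw [h] at this; exact this⟩
    have hnc : (∑' J : ↥Aᶜ, term J.1) = ∑' p : ℕ × Dy, term (encS p.1 p.2) := by
      rw [← Equiv.tsum_eq ((Equiv.ofInjective _ hSinj).trans (Equiv.setCongr hrange))
        (fun J : ↥Aᶜ => term J.1)]
      exact tsum_congr fun p => rfl
    have hprod : (∑' p : ℕ × Dy, term (encS p.1 p.2))
        = ∑' s : ℕ, ∑' I' : Dy, term (encS s I') :=
      ENNReal.tsum_prod (f := fun s I' => term (encS s I'))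
    have hsingle : (∑' s : ℕ, ∑' I' : Dy, term (encS s I'))
        = ∑' I' : Dy, term (encS m I') := by
      apply tsum_eq_single m
      intro s hs
      rw [ENNReal.tsum_eq_zero]
      intro I'
      simp only [hterm]
      apply Set.indicator_of_notMem
      intro hmem
      rw [hxe] at hmem
      exact hs (pmap_mem_encS hx' hmem).1
    have hnc2 : (∑' I' : Dy, term (encS m I')) ≤ S ^ (2:ℝ) := by
      by_cases hm2 : m % 2 = 0
      · have hps : ∀ I' : Dy, Psi (encS m I') = (m/2+1, I') := fun I' => by
          rw [Psi_sub (dec_encS m I'), if_pos hm2]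
        have hterm_eq : ∀ I' : Dy, term (encS m I') =
            Set.indicator (dint (encS m I'))
              (fun _ => ENNReal.ofReal ((F (m/2+1) I') ^ 2)) x := by
          intro I'
          simp only [hterm, hg, hps]
        calc (∑' I' : Dy, term (encS m I'))
            = ∑' I' : Dy, Set.indicator (dint (encS m I'))
                (fun _ => ENNReal.ofReal ((F (m/2+1) I') ^ 2)) x := tsum_congr hterm_eq
        _ ≤ sqFn (F (m/2+1)) x' := key_le (F (m/2+1)) x x' (encS m) (fun I => I)
              (fun _ _ h => h)
              (fun I' hI' => by rw [hxe] at hI'; exact (pmap_mem_encS hx' hI').2)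
        _ ≤ S ^ (2:ℝ) := hFk _ _
      · have hps : ∀ I' : Dy, Psi (encS m I') = (0, encS (m/2) I') := fun I' => by
          rw [Psi_sub (dec_encS m I'), if_neg hm2]
        have hterm_eq : ∀ I' : Dy, term (encS m I') =
            Set.indicator (dint (encS m I'))
              (fun _ => ENNReal.ofReal ((F 0 (encS (m/2) I')) ^ 2)) x := by
          intro I'
          simp only [hterm, hg, hps]
        calc (∑' I' : Dy, term (encS m I'))
            = ∑' I' : Dy, Set.indicator (dint (encS m I'))
                (fun _ => ENNReal.ofReal ((F 0 (encS (m/2) I')) ^ 2)) x := tsum_congr hterm_eq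
        _ ≤ sqFn (F 0) (pmap (m/2) x') := key_le (F 0) x (pmap (m/2) x') (encS m)
              (encS (m/2)) (encS_inj _)
              (fun I' hI' => by rw [hxe] at hI'; exact mem_encS _ (pmap_mem_encS hx' hI').2)
        _ ≤ S ^ (2:ℝ) := hFk _ _
    rw [hsplit, hnc, hprod, hsingle]
    exact add_le_add (le_trans hchain (hFk 0 x)) hnc2
  refine iSup_le fun x => ?_
  have h24 : (2:ℝ≥0∞) ^ (2:ℝ) = 4 := by
    rw [show (2:ℝ) = ((2:ℕ):ℝ) by norm_num, ENNReal.rpow_natCast]; norm_num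
  calc sqFn g x ^ (1/2:ℝ) ≤ ((2*S) ^ (2:ℝ)) ^ (1/2:ℝ) := by
        apply ENNReal.rpow_le_rpow _ (by norm_num)
        calc sqFn g x ≤ S^(2:ℝ) + S^(2:ℝ) := main x
        _ = 2 * S^(2:ℝ) := (two_mul _).symm
        _ ≤ 4 * S^(2:ℝ) := mul_le_mul_left (by norm_num) _
        _ = (2*S) ^ (2:ℝ) := by
            rw [ENNReal.mul_rpow_of_nonneg _ _ (by norm_num : (0:ℝ) ≤ 2), h24]
  _ = 2 * S := by
        rw [← ENNReal.rpow_mul]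
        norm_num

end SL19


/-- SL^∞ is isomorphic to the ℓ^∞-direct sum (Σ_{k∈ℕ} SL^∞)_∞ of
countably many copies of itself: there are mutually inverse bounded linear maps
between SL^∞ and the space of sequences (f_k) with sup_k ‖f_k‖_{SL^∞} < ∞. -/
theorem slinf_iso_ellinf_sum :
    ∃ (U : (Dy → ℝ) →ₗ[ℝ] (ℕ → Dy → ℝ)) (V : (ℕ → Dy → ℝ) →ₗ[ℝ] (Dy → ℝ))
      (c₁ c₂ : NNReal),
      (∀ f : Dy → ℝ, (⨆ k : ℕ, slNorm (U f k)) ≤ (c₁ : ℝ≥0∞) * slNorm f) ∧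
      (∀ F : ℕ → Dy → ℝ, slNorm (V F) ≤ (c₂ : ℝ≥0∞) * ⨆ k : ℕ, slNorm (F k)) ∧
      (∀ f : Dy → ℝ, slNorm f ≠ ⊤ → V (U f) = f) ∧
      (∀ F : ℕ → Dy → ℝ, (⨆ k : ℕ, slNorm (F k)) ≠ ⊤ → U (V F) = F) := by
  classical
  refine ⟨{ toFun := fun f k I => f (SL19.Phi k I), map_add' := fun _ _ => rfl,
            map_smul' := fun _ _ => rfl },
          { toFun := fun F J => F (SL19.Psi J).1 (SL19.Psi J).2,
            map_add' := fun _ _ => rfl, map_smul' := fun _ _ => rfl },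
          1, 2, ?_, ?_, ?_, ?_⟩
  · intro f
    rw [ENNReal.coe_one, one_mul]
    exact iSup_le fun k => SL19.U_bound f k
  · intro F
    rw [show ((2:NNReal):ℝ≥0∞) = 2 from by norm_num]
    exact SL19.V_bound F
  · intro f _
    funext J
    show f (SL19.Phi (SL19.Psi J).1 (SL19.Psi J).2) = f J
    rw [SL19.Phi_Psi]
  · intro F _
    funext k I
    show F (SL19.Psi (SL19.Phi k I)).1 (SL19.Psi (SL19.Phi k I)).2 = F k I
    rw [SL19.Psi_Phi]


end
end
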